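/- arXiv:2301.11602 — 3 statements merged into one kernel-verified Lean document; each statement's English description precedes it below -/
import Mathlib

section
/- Let d ≥ 1 be odd. Then the affine hull of P_{∂σ_{d+1}} = conv(columns of L), where L_{ii} = d+1 and L_{ij} = (-1)^{i+j-1} for i ≠ j, equals { x ∈ ℝ^{d+2} : Σ_{k odd} x_k − Σ_{k even} x_k = 0 }. -/
open Matrix

/-- The `d`-th Laplacian matrix of the boundary of the `(d+1)`-simplex:
`L_{ii} = d+1` and `L_{ij} = (-1)^{i+j-1}` for `i ≠ j` (1-indexed; here 0-indexed,
so the sign is `(-1)^{i+j+1}`). -/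
def lap (d : ℕ) : Matrix (Fin (d+2)) (Fin (d+2)) ℝ :=
  Matrix.of fun i j => if i = j then (d+1 : ℝ) else (-1 : ℝ)^((i:ℕ)+(j:ℕ)+1)

lemma lap_apply (d : ℕ) (i j : Fin (d+2)) :
    lap d i j = (d+2 : ℝ) * (if i = j then 1 else 0) - (-1:ℝ)^(i:ℕ) * (-1:ℝ)^(j:ℕ) := by
  unfold lap
  simp only [Matrix.of_apply]
  split
  · rename_i h; subst h
    rw [← pow_add, Even.neg_one_pow ⟨(i:ℕ), rfl⟩]
    ring
  · rw [pow_add, pow_add, pow_one]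
    ring

lemma neg_one_sq' (k : ℕ) : (-1:ℝ)^k * (-1:ℝ)^k = 1 := by
  rw [← pow_add]; exact Even.neg_one_pow ⟨k, rfl⟩

lemma alt_sum (d : ℕ) (ho : Odd d) : ∑ j : Fin (d+2), (-1:ℝ)^(j:ℕ) = 1 := by
  rw [Fin.sum_univ_eq_sum_range (fun j => (-1:ℝ)^j), neg_one_geom_sum]
  have : ¬ Even (d+2) := by
    rcases ho with ⟨m, rfl⟩
    simp [Nat.even_add_one, parity_simps]
  simp [this]

noncomputable def FF (d : ℕ) : (Fin (d+2) → ℝ) →ₗ[ℝ] ℝ where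
  toFun x := ∑ k : Fin (d+2), (-1:ℝ)^(k:ℕ) * x k
  map_add' x y := by simp [mul_add, Finset.sum_add_distrib]
  map_smul' c x := by
    simp [Finset.mul_sum]
    exact Finset.sum_congr rfl fun _ _ => by ring

lemma FF_eq (d : ℕ) (x : Fin (d+2) → ℝ) :
    FF d x = (∑ k ∈ Finset.univ.filter fun k : Fin (d+2) => Odd ((k:ℕ)+1), x k) -
           (∑ k ∈ Finset.univ.filter fun k : Fin (d+2) => Even ((k:ℕ)+1), x k) := by
  have h := Finset.sum_filter_add_sum_filter_not Finset.univ
    (fun k : Fin (d+2) => Odd ((k:ℕ)+1)) (fun k => (-1:ℝ)^(k:ℕ) * x k)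
  have h1 : (∑ k ∈ Finset.univ.filter fun k : Fin (d+2) => Odd ((k:ℕ)+1), (-1:ℝ)^(k:ℕ) * x k)
      = ∑ k ∈ Finset.univ.filter fun k : Fin (d+2) => Odd ((k:ℕ)+1), x k := by
    refine Finset.sum_congr rfl fun k hk => ?_
    have : Even (k:ℕ) := by
      rcases Finset.mem_filter.mp hk with ⟨_, hodd⟩
      simpa using Nat.Odd.sub_odd hodd odd_one
    rw [this.neg_one_pow, one_mul]
  have h2 : (∑ k ∈ Finset.univ.filter fun k : Fin (d+2) => ¬ Odd ((k:ℕ)+1), (-1:ℝ)^(k:ℕ) * x k)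
      = -∑ k ∈ Finset.univ.filter fun k : Fin (d+2) => Even ((k:ℕ)+1), x k := by
    rw [← Finset.sum_neg_distrib]
    refine Finset.sum_congr (Finset.filter_congr fun k _ => by simp [Nat.not_odd_iff_even])
      fun k hk => ?_
    have : Odd (k:ℕ) := by
      rcases Finset.mem_filter.mp hk with ⟨_, heven⟩
      rw [Nat.even_add_one] at heven
      exact Nat.not_even_iff_odd.mp heven
    rw [this.neg_one_pow]; ring
  show (∑ k : Fin (d+2), (-1:ℝ)^(k:ℕ) * x k) = _
  rw [← h, h1, h2]
  ring

/-- for odd `d ≥ 1`, the affine hull of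
`P_{∂σ_{d+1}} = conv(columns of L)` equals
`{x ∈ ℝ^{d+2} : Σ_{k odd} x_k − Σ_{k even} x_k = 0}`, indices `k` being 1-indexed,
i.e. `k = (k:ℕ)+1` below. -/
theorem stmt9 (d : ℕ) (hd : 1 ≤ d) (ho : Odd d) :
    (affineSpan ℝ (Set.range (lap d)ᵀ) : Set (Fin (d+2) → ℝ)) =
      {x | (∑ k ∈ Finset.univ.filter fun k : Fin (d+2) => Odd ((k:ℕ)+1), x k) -
           (∑ k ∈ Finset.univ.filter fun k : Fin (d+2) => Even ((k:ℕ)+1), x k) = 0} := by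
  have hN : (d+2 : ℝ) ≠ 0 := by positivity
  ext x
  simp only [Set.mem_setOf_eq, ← FF_eq, SetLike.mem_coe]
  constructor
  · -- affineSpan ⊆ ker FF
    intro hx
    have hsub : affineSpan ℝ (Set.range (lap d)ᵀ) ≤ (LinearMap.ker (FF d)).toAffineSubspace := by
      rw [affineSpan_le]
      rintro _ ⟨j, rfl⟩
      rw [SetLike.mem_coe, Submodule.mem_toAffineSubspace, LinearMap.mem_ker]
      show ∑ i : Fin (d+2), (-1:ℝ)^(i:ℕ) * (lap d)ᵀ j i = 0
      simp only [transpose_apply, lap_apply, mul_sub, Finset.sum_sub_distrib]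
      have e1 : ∑ i : Fin (d+2), (-1:ℝ)^(i:ℕ) * ((d+2:ℝ) * (if i = j then 1 else 0))
          = (-1:ℝ)^(j:ℕ) * (d+2:ℝ) := by
        rw [Finset.sum_eq_single j]
        · simp
        · intro i _ hij; simp [hij]
        · simp
      have e2 : ∑ i : Fin (d+2), (-1:ℝ)^(i:ℕ) * ((-1:ℝ)^(i:ℕ) * (-1:ℝ)^(j:ℕ))
          = (d+2:ℝ) * (-1:ℝ)^(j:ℕ) := by
        have : ∀ i : Fin (d+2), (-1:ℝ)^(i:ℕ) * ((-1:ℝ)^(i:ℕ) * (-1:ℝ)^(j:ℕ))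
            = (-1:ℝ)^(j:ℕ) := fun i => by rw [← mul_assoc, neg_one_sq' (i:ℕ), one_mul]
        rw [Finset.sum_congr rfl fun i _ => this i, Finset.sum_const]
        simp [Finset.card_univ]
      rw [e1, e2]; ring
    have := hsub hx
    rwa [Submodule.mem_toAffineSubspace, LinearMap.mem_ker] at this
  · -- ker FF ⊆ affineSpan
    intro hx
    set s : ℝ := (∑ k : Fin (d+2), x k) / (d+2 : ℝ) with hs
    set w : Fin (d+2) → ℝ := fun j => x j / (d+2 : ℝ) + (1 - s) * (-1:ℝ)^(j:ℕ) with hwdef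
    have hw : ∑ j : Fin (d+2), w j = 1 := by
      simp only [hwdef, Finset.sum_add_distrib, ← Finset.mul_sum, alt_sum d ho,
        ← Finset.sum_div]
      rw [← hs]; ring
    have hA : ∑ j : Fin (d+2), w j * (-1:ℝ)^(j:ℕ) = (1 - s) * (d+2 : ℝ) := by
      have expand : ∀ j : Fin (d+2), w j * (-1:ℝ)^(j:ℕ)
          = ((-1:ℝ)^(j:ℕ) * x j) / (d+2:ℝ) + (1 - s) := by
        intro j
        simp only [hwdef]
        rw [add_mul, mul_assoc, neg_one_sq' (j:ℕ)]
        ring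
      rw [Finset.sum_congr rfl fun j _ => expand j, Finset.sum_add_distrib,
        ← Finset.sum_div]
      have : (∑ j : Fin (d+2), (-1:ℝ)^(j:ℕ) * x j) = 0 := hx
      rw [this, Finset.sum_const]
      simp [Finset.card_univ]
      ring
    have hcomb : Finset.univ.affineCombination ℝ (lap d)ᵀ w = x := by
      show Finset.univ.affineCombination ℝ (fun j => (lap d)ᵀ j) w = x
      rw [Finset.affineCombination_eq_linear_combination _ _ _ hw]
      funext i
      simp only [Finset.sum_apply, Pi.smul_apply, smul_eq_mul]
      have step : ∀ j : Fin (d+2), w j * (lap d)ᵀ j i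
          = w j * ((d+2:ℝ) * (if i = j then 1 else 0)) - (-1:ℝ)^(i:ℕ) * (w j * (-1:ℝ)^(j:ℕ)) := by
        intro j
        rw [transpose_apply, lap_apply]
        ring
      rw [Finset.sum_congr rfl fun j _ => step j, Finset.sum_sub_distrib, ← Finset.mul_sum, hA]
      have e1 : ∑ j : Fin (d+2), w j * ((d+2:ℝ) * (if i = j then 1 else 0))
          = w i * (d+2:ℝ) := by
        rw [Finset.sum_eq_single i]
        · simp
        · intro j _ hij; simp [Ne.symm hij]
        · simp
      rw [e1]
      simp only [hwdef]
      field_simp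
      ring
    have := affineCombination_mem_affineSpan hw (lap d)ᵀ
    rwa [hcomb] at this
end

section
/- Let d ≥ 2 be even. The d-th Laplacian polytope of the boundary of the (d+1)-simplex has exactly (d+2)²/4 facets. -/
open Matrix

/-- The vertices `b^{(ℓ)} ∈ ℝ^d`, `1 ≤ ℓ ≤ d+2`, of the full-dimensional realization
of the `d`-th Laplacian polytope of `∂σ_{d+1}`: `b^{(ℓ)}_k = d+1` if `k = ℓ-2` and
`b^{(ℓ)}_k = (-1)^{k+ℓ-1}` otherwise (1-indexed; with the 0-indexing below the
condition reads `k+2 = ℓ` and the sign is `(-1)^{k+ℓ+1}`). -/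
def bvec (d : ℕ) (ℓ : Fin (d+2)) : Fin d → ℝ := fun k =>
  if (k:ℕ) + 2 = (ℓ:ℕ) then (d+1 : ℝ) else (-1 : ℝ)^((k:ℕ)+(ℓ:ℕ)+1)

/-- The `d`-th Laplacian polytope of `∂σ_{d+1}`, realized full-dimensionally. -/
def LapPolytope (d : ℕ) : Set (Fin d → ℝ) := convexHull ℝ (Set.range (bvec d))

/-- `F` is a facet of the Laplacian polytope: a nonempty face cut out by a valid
inequality, whose affine hull has dimension `d-1`. -/
def IsFacetOf (d : ℕ) (F : Set (Fin d → ℝ)) : Prop :=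
  F.Nonempty ∧ ∃ (a : Fin d → ℝ) (c : ℝ),
    (∀ x ∈ LapPolytope d, ∑ k, a k * x k ≤ c) ∧
    F = {x ∈ LapPolytope d | ∑ k, a k * x k = c} ∧
    Module.finrank ℝ (affineSpan ℝ F).direction = d - 1

def esh (d : ℕ) (k : Fin d) : Fin (d+2) := ⟨(k:ℕ)+2, by omega⟩

lemma sum_split (d : ℕ) (f : Fin (d+2) → ℝ) :
    ∑ ℓ : Fin (d+2), f ℓ = f 0 + f 1 + ∑ k : Fin d, f (esh d k) := by
  rw [Fin.sum_univ_succ, Fin.sum_univ_succ, ← add_assoc]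
  have h2 : ∀ k : Fin d, k.succ.succ = esh d k := by
    intro k; ext; simp [esh, Fin.val_succ]
  exact congrArg _ (Finset.sum_congr rfl fun k _ => congrArg f (h2 k))

lemma signsum (n : ℕ) (hn : Even n) : ∑ i : Fin n, (-1:ℝ)^(i:ℕ) = 0 := by
  rw [Fin.sum_univ_eq_sum_range, neg_one_geom_sum, if_pos hn]

lemma bvec_split (d : ℕ) (ℓ : Fin (d+2)) (k : Fin d) :
    bvec d ℓ k = (-1:ℝ)^((k:ℕ)+(ℓ:ℕ)+1) + (if (k:ℕ) + 2 = (ℓ:ℕ) then (d+2:ℝ) else 0) := by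
  unfold bvec
  by_cases h : (k:ℕ) + 2 = (ℓ:ℕ)
  · rw [if_pos h, if_pos h, ← h]
    have e : (k:ℕ) + ((k:ℕ)+2) + 1 = 2*((k:ℕ)+1) + 1 := by ring
    rw [e, pow_succ, pow_mul]
    norm_num
    ring
  · rw [if_neg h, if_neg h, add_zero]

lemma dep_unique (d : ℕ) (hd : Even d) (lam : Fin (d+2) → ℝ)
    (h0 : ∑ ℓ, lam ℓ = 0) (h1 : ∀ k : Fin d, ∑ ℓ, lam ℓ * bvec d ℓ k = 0) :
    ∀ ℓ, lam ℓ = (-1:ℝ)^(ℓ:ℕ) * lam 0 := by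
  set A := ∑ ℓ : Fin (d+2), (-1:ℝ)^(ℓ:ℕ) * lam ℓ with hA
  have step1 : ∀ k : Fin d, lam (esh d k) * ((d:ℝ)+2) = (-1:ℝ)^(k:ℕ) * A := by
    intro k
    have h := h1 k
    have e1 : ∀ ℓ : Fin (d+2), lam ℓ * bvec d ℓ k
        = (-1:ℝ)^((k:ℕ)+1) * ((-1:ℝ)^(ℓ:ℕ) * lam ℓ)
          + lam ℓ * (if (k:ℕ) + 2 = (ℓ:ℕ) then (d+2:ℝ) else 0) := by
      intro ℓ
      rw [bvec_split, mul_add]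
      congr 1
      rw [show (k:ℕ)+(ℓ:ℕ)+1 = ((k:ℕ)+1)+(ℓ:ℕ) by ring, pow_add]
      ring
    rw [Finset.sum_congr rfl (fun ℓ _ => e1 ℓ), Finset.sum_add_distrib,
      ← Finset.mul_sum, ← hA] at h
    have e2 : ∑ ℓ : Fin (d+2), lam ℓ * (if (k:ℕ) + 2 = (ℓ:ℕ) then (d+2:ℝ) else 0)
        = lam (esh d k) * ((d:ℝ)+2) := by
      rw [Finset.sum_eq_single (esh d k)]
      · simp [esh]
      · intro b _ hb
        rw [if_neg, mul_zero]
        intro hh; exact hb (by ext; simpa [esh] using hh.symm)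
      · simp
    rw [e2, pow_succ] at h
    linarith
  have hd2 : (0:ℝ) < (d:ℝ)+2 := by positivity
  have step2 : ∑ k : Fin d, lam (esh d k) = 0 := by
    have h : (∑ k : Fin d, lam (esh d k)) * ((d:ℝ)+2) = (∑ k : Fin d, (-1:ℝ)^(k:ℕ)) * A := by
      rw [Finset.sum_mul, Finset.sum_mul]
      exact Finset.sum_congr rfl fun k _ => step1 k
    rw [signsum d hd, zero_mul] at h
    rcases mul_eq_zero.1 h with h | h
    · exact h
    · linarith
  have step3 : lam 0 + lam 1 = 0 := by
    have := sum_split d lam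
    rw [h0, step2, add_zero] at this
    linarith
  have step4 : A = lam 0 * ((d:ℝ)+2) := by
    have hs := sum_split d (fun ℓ => (-1:ℝ)^(ℓ:ℕ) * lam ℓ)
    rw [← hA] at hs
    simp only [Fin.val_zero, Fin.val_one, pow_zero, pow_one, one_mul] at hs
    have hs2 : ∀ k : Fin d, (-1:ℝ)^((esh d k : Fin (d+2)):ℕ) * lam (esh d k)
        = (-1:ℝ)^(k:ℕ) * lam (esh d k) := by
      intro k
      rw [show ((esh d k : Fin (d+2)):ℕ) = (k:ℕ)+2 from rfl, pow_add]
      norm_num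
    rw [Finset.sum_congr rfl (fun k _ => hs2 k)] at hs
    have hSs : (∑ k : Fin d, (-1:ℝ)^(k:ℕ) * lam (esh d k)) * ((d:ℝ)+2) = (d:ℝ) * A := by
      rw [Finset.sum_mul]
      have : ∀ k : Fin d, (-1:ℝ)^(k:ℕ) * lam (esh d k) * ((d:ℝ)+2) = A := by
        intro k
        rw [mul_assoc, step1 k, ← mul_assoc, ← pow_add,
          show (k:ℕ)+(k:ℕ) = 2*(k:ℕ) by ring, pow_mul]
        norm_num
      rw [Finset.sum_congr rfl (fun k _ => this k), Finset.sum_const, Finset.card_univ,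
        Fintype.card_fin, nsmul_eq_mul]
    have heq : A * ((d:ℝ)+2) = (lam 0 + -1 * lam 1 + ∑ k : Fin d, (-1:ℝ)^(k:ℕ) * lam (esh d k)) * ((d:ℝ)+2) := by
      rw [← hs]
    rw [add_mul, hSs] at heq
    have e : A * ((d:ℝ)+2) - (d:ℝ)*A = A*2 := by ring
    have e2 : (lam 0 + -1*lam 1) * ((d:ℝ)+2) = (lam 0 - lam 1) * ((d:ℝ)+2) := by ring
    have h2 : A*2 = (lam 0 - lam 1) * ((d:ℝ)+2) := by linarith
    have h3 : lam 0 - lam 1 = 2 * lam 0 := by linarith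
    rw [h3] at h2
    linarith
  have step5 : ∀ k : Fin d, lam (esh d k) = (-1:ℝ)^(((esh d k : Fin (d+2))):ℕ) * lam 0 := by
    intro k
    have h := step1 k
    rw [step4] at h
    have : lam (esh d k) = (-1:ℝ)^(k:ℕ) * lam 0 := by
      have := mul_right_cancel₀ (ne_of_gt hd2) (by rw [h]; ring : lam (esh d k) * ((d:ℝ)+2) = ((-1:ℝ)^(k:ℕ) * lam 0) * ((d:ℝ)+2))
      exact this
    rw [this, show ((esh d k : Fin (d+2)):ℕ) = (k:ℕ)+2 from rfl, pow_add]
    norm_num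
  intro ℓ
  obtain ⟨v, hv⟩ := ℓ
  match v, hv with
  | 0, hv => simp
  | 1, hv =>
    have : (⟨1, hv⟩ : Fin (d+2)) = 1 := rfl
    rw [this]
    simp only [Fin.val_one, pow_one]
    linarith
  | (n+2), hv =>
    have : (⟨n+2, hv⟩ : Fin (d+2)) = esh d ⟨n, by omega⟩ := rfl
    rw [this]
    exact step5 _

def vvec (d : ℕ) (ℓ : Fin (d+2)) : Fin (d+1) → ℝ := Fin.snoc (bvec d ℓ) 1

lemma dep_coord (d : ℕ) (k : Fin d) :
    ∑ ℓ : Fin (d+2), (-1:ℝ)^(ℓ:ℕ) * bvec d ℓ k = 0 := by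
  have h1 : ∀ ℓ : Fin (d+2), (-1:ℝ)^(ℓ:ℕ) * bvec d ℓ k
      = (-1:ℝ)^((k:ℕ)+1) + (-1:ℝ)^(ℓ:ℕ) * (if (k:ℕ) + 2 = (ℓ:ℕ) then (d+2:ℝ) else 0) := by
    intro ℓ
    rw [bvec_split, mul_add]
    congr 1
    rw [show (k:ℕ)+(ℓ:ℕ)+1 = (ℓ:ℕ) + (ℓ:ℕ) + ((k:ℕ)+1) - (ℓ:ℕ) by omega]
    rw [show (-1:ℝ)^(ℓ:ℕ) * (-1:ℝ)^((ℓ:ℕ)+(ℓ:ℕ)+((k:ℕ)+1)-(ℓ:ℕ)) = (-1:ℝ)^((ℓ:ℕ) + ((ℓ:ℕ)+(ℓ:ℕ)+((k:ℕ)+1)-(ℓ:ℕ))) from (pow_add (-1:ℝ) _ _).symm]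
    rw [show (ℓ:ℕ) + ((ℓ:ℕ)+(ℓ:ℕ)+((k:ℕ)+1)-(ℓ:ℕ)) = 2*(ℓ:ℕ) + ((k:ℕ)+1) by omega, pow_add, pow_mul]
    norm_num
  rw [Finset.sum_congr rfl (fun ℓ _ => h1 ℓ), Finset.sum_add_distrib]
  have h2 : ∑ ℓ : Fin (d+2), (-1:ℝ)^(ℓ:ℕ) * (if (k:ℕ) + 2 = (ℓ:ℕ) then (d+2:ℝ) else 0)
      = (-1:ℝ)^((k:ℕ)+2) * (d+2) := by
    rw [Finset.sum_eq_single (esh d k)]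
    · simp [esh]
    · intro b _ hb
      rw [if_neg, mul_zero]
      intro h; exact hb (by ext; simpa [esh] using h.symm)
    · simp
  rw [h2, Finset.sum_const, Finset.card_univ, Fintype.card_fin,
    show (k:ℕ)+2 = ((k:ℕ)+1)+1 by ring, pow_succ]
  push_cast
  ring

lemma dep_vvec (d : ℕ) (hd : Even d) :
    ∑ ℓ : Fin (d+2), (-1:ℝ)^(ℓ:ℕ) • vvec d ℓ = 0 := by
  funext i
  rw [Finset.sum_apply]
  refine Fin.lastCases ?_ ?_ i
  · have h2 : Even (d+2) := by rcases hd with ⟨e,he⟩; exact ⟨e+1, by omega⟩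
    simpa [vvec, Fin.snoc_last] using signsum (d+2) h2
  · intro k
    simp only [vvec, Pi.smul_apply, Fin.snoc_castSucc, smul_eq_mul, Pi.zero_apply]
    exact dep_coord d k

/-- general position: any vanishing affine dependence that is zero somewhere is zero -/
lemma gp (d : ℕ) (hd : Even d) (lam : Fin (d+2) → ℝ) (m : Fin (d+2)) (hm : lam m = 0)
    (h0 : ∑ ℓ, lam ℓ = 0) (h1 : ∀ k : Fin d, ∑ ℓ, lam ℓ * bvec d ℓ k = 0) : lam = 0 := by
  have h := dep_unique d hd lam h0 h1
  have h2 : lam 0 = 0 := by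
    have := h m
    rw [hm] at this
    rcases mul_eq_zero.1 this.symm with hh | hh
    · exact absurd hh (by positivity)
    · exact hh
  funext ℓ
  rw [h ℓ, h2, mul_zero, Pi.zero_apply]

lemma li (d : ℕ) (hd : Even d) (m : Fin (d+2)) :
    LinearIndependent ℝ (fun j : {j : Fin (d+2) // j ≠ m} => vvec d (j : Fin (d+2))) := by
  rw [Fintype.linearIndependent_iff]
  intro g hg
  classical
  set lam : Fin (d+2) → ℝ := fun j => if h : j = m then 0 else g ⟨j, h⟩ with hlam
  have hlame : ∀ j : {j : Fin (d+2) // j ≠ m}, lam (j : Fin (d+2)) = g j := by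
    intro j
    rw [hlam]
    simp only [dif_neg j.prop]
  have hmm : lam m = 0 := by simp [hlam]
  have hv : ∑ j : Fin (d+2), lam j • vvec d j = 0 := by
    rw [← Finset.add_sum_erase Finset.univ _ (Finset.mem_univ m), hmm, zero_smul, zero_add]
    rw [Finset.sum_subtype (Finset.univ.erase m) (p := fun j => j ≠ m)
      (by intro x; simp [Finset.mem_erase])]
    rw [← hg]
    exact Finset.sum_congr rfl fun j _ => by rw [hlame j]
  have h0 : ∑ ℓ, lam ℓ = 0 := by
    have := congrFun hv (Fin.last d)
    rw [Finset.sum_apply] at this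
    simpa [vvec, Fin.snoc_last] using this
  have h1 : ∀ k : Fin d, ∑ ℓ, lam ℓ * bvec d ℓ k = 0 := by
    intro k
    have := congrFun hv (Fin.castSucc k)
    rw [Finset.sum_apply] at this
    simpa [vvec, Fin.snoc_castSucc] using this
  have hall := gp d hd lam m hmm h0 h1
  intro i
  rw [← hlame i, hall, Pi.zero_apply]

lemma ai (d : ℕ) (hd : Even d) (m : Fin (d+2)) :
    AffineIndependent ℝ (fun j : {j : Fin (d+2) // j ≠ m} => bvec d (j : Fin (d+2))) := by
  rw [affineIndependent_iff]
  intro s w hw hsum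
  have hli := Fintype.linearIndependent_iff.1 (li d hd m)
  classical
  have hgz : ∀ j : {j : Fin (d+2) // j ≠ m}, (if j ∈ s then w j else 0) = 0 := by
    apply hli
    have e1 : ∀ j : {j : Fin (d+2) // j ≠ m}, (if j ∈ s then w j else 0) • vvec d (j:Fin (d+2))
        = (if j ∈ s then w j • vvec d (j:Fin (d+2)) else 0) := fun j => by rw [ite_smul, zero_smul]
    have e2 : ∑ j : {j : Fin (d+2) // j ≠ m}, (if j ∈ s then w j else 0) • vvec d (j : Fin (d+2))
        = ∑ j ∈ s, w j • vvec d (j : Fin (d+2)) := by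
      rw [Finset.sum_congr rfl (fun j _ => e1 j), Finset.sum_ite_mem, Finset.univ_inter]
    rw [e2]
    funext i
    rw [Finset.sum_apply]
    refine Fin.lastCases ?_ ?_ i
    · simpa [vvec, Fin.snoc_last] using hw
    · intro k
      have := congrFun hsum k
      rw [Finset.sum_apply] at this
      simpa [vvec, Fin.snoc_castSucc] using this
  intro e he
  have := hgz e
  rwa [if_pos he] at this

lemma exists_functional (d : ℕ) (hd : Even d) (ℓ₀ m₀ : Fin (d+2))
    (hl : Even (ℓ₀:ℕ)) (hm : Odd (m₀:ℕ)) :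
    ∃ (a : Fin d → ℝ) (c : ℝ), ∀ j : Fin (d+2),
      ∑ k, a k * bvec d j k = c - (if j = ℓ₀ ∨ j = m₀ then 1 else 0) := by
  classical
  have hne : ℓ₀ ≠ m₀ := by
    intro h; rw [h] at hl; exact (Nat.not_odd_iff_even.2 hl) hm
  have hcard : Fintype.card {j : Fin (d+2) // j ≠ m₀} = d + 1 := by
    simp [Fintype.card_subtype_compl]
  have hfr : Module.finrank ℝ (Fin (d+1) → ℝ) = d + 1 := by simp [Module.finrank_pi]
  have hli := li d hd m₀
  haveI : Nonempty {j : Fin (d+2) // j ≠ m₀} := ⟨⟨ℓ₀, hne⟩⟩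
  let B := basisOfLinearIndependentOfCardEqFinrank hli (by rw [hcard, hfr])
  have hB : ⇑B = (fun j : {j : Fin (d+2) // j ≠ m₀} => vvec d (j : Fin (d+2))) :=
    coe_basisOfLinearIndependentOfCardEqFinrank _ _
  set φ : (Fin (d+1) → ℝ) →ₗ[ℝ] ℝ := B.coord ⟨ℓ₀, hne⟩ with hφ
  -- values of φ on the vvec's
  have hval : ∀ j : Fin (d+2), φ (vvec d j) = (if j = ℓ₀ ∨ j = m₀ then 1 else 0) := by
    have hvne : ∀ (j : Fin (d+2)) (h : j ≠ m₀), φ (vvec d j) = if j = ℓ₀ then 1 else 0 := by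
      intro j h
      have : vvec d j = B ⟨j, h⟩ := by rw [hB]
      rw [this, hφ, Module.Basis.coord_apply, Module.Basis.repr_self, Finsupp.single_apply]
      congr 1
      simp [Subtype.ext_iff, eq_comm]
    have hvm : φ (vvec d m₀) = 1 := by
      have hdep := congrArg φ (dep_vvec d hd)
      rw [map_sum, map_zero] at hdep
      have hterm : ∀ ℓ : Fin (d+2), φ ((-1:ℝ)^(ℓ:ℕ) • vvec d ℓ)
          = (-1:ℝ)^(ℓ:ℕ) * φ (vvec d ℓ) := fun ℓ => by rw [_root_.map_smul, smul_eq_mul]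
      rw [Finset.sum_congr rfl (fun ℓ _ => hterm ℓ)] at hdep
      have hzero : ∀ ℓ ∈ Finset.univ, ℓ ∉ ({ℓ₀, m₀} : Finset (Fin (d+2))) →
          (-1:ℝ)^(ℓ:ℕ) * φ (vvec d ℓ) = 0 := by
        intro ℓ _ hℓ
        simp only [Finset.mem_insert, Finset.mem_singleton, not_or] at hℓ
        rw [hvne ℓ hℓ.2, if_neg hℓ.1, mul_zero]
      rw [← Finset.sum_subset (Finset.subset_univ ({ℓ₀, m₀} : Finset (Fin (d+2)))) hzero,
        Finset.sum_pair hne, hvne ℓ₀ hne, if_pos rfl, hl.neg_one_pow, hm.neg_one_pow] at hdep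
      linarith
    intro j
    by_cases h : j = m₀
    · rw [h, hvm, if_pos (Or.inr rfl)]
    · rw [hvne j h]
      by_cases h2 : j = ℓ₀
      · rw [if_pos h2, if_pos (Or.inl h2)]
      · rw [if_neg h2, if_neg (by tauto)]
  refine ⟨fun k => -φ (fun i => if Fin.castSucc k = i then 1 else 0),
    φ (fun i => if Fin.last d = i then 1 else 0), fun j => ?_⟩
  have hexp := LinearMap.pi_apply_eq_sum_univ φ (vvec d j)
  rw [Fin.sum_univ_castSucc] at hexp
  simp only [vvec, Fin.snoc_castSucc, Fin.snoc_last, smul_eq_mul, one_mul] at hexp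
  rw [show Fin.snoc (bvec d j) (1:ℝ) = vvec d j from rfl] at hexp
  rw [← hval j, hexp]
  have : ∀ k : Fin d, (fun k => -φ (fun i => if Fin.castSucc k = i then 1 else 0)) k * bvec d j k
      = -(bvec d j k * φ (fun i => if Fin.castSucc k = i then 1 else 0)) := fun k => by ring
  rw [Finset.sum_congr rfl (fun k _ => this k), Finset.sum_neg_distrib]
  ring

lemma mem_conv_finset (d : ℕ) (S : Finset (Fin (d+2))) (x : Fin d → ℝ) :
    x ∈ convexHull ℝ (bvec d '' ↑S) ↔ ∃ w : Fin (d+2) → ℝ,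
      (∀ i, 0 ≤ w i) ∧ (∀ i ∉ S, w i = 0) ∧ ∑ i, w i = 1 ∧ ∑ i, w i • bvec d i = x := by
  classical
  constructor
  · intro hx
    rw [show bvec d '' ↑S = Set.range (fun i : {i // i ∈ S} => bvec d (i : Fin (d+2))) from
        Set.image_eq_range _ _, convexHull_range_eq_exists_affineCombination] at hx
    obtain ⟨s, w', hw0, hw1, hx⟩ := hx
    rw [Finset.affineCombination_eq_linear_combination _ _ _ hw1] at hx
    set w : Fin (d+2) → ℝ := fun i => if h : i ∈ S then (if ⟨i, h⟩ ∈ s then w' ⟨i, h⟩ else 0) else 0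
      with hw
    have hwnn : ∀ i, 0 ≤ w i := by
      intro i
      simp only [hw]
      by_cases h : i ∈ S
      · rw [dif_pos h]
        by_cases h2 : (⟨i, h⟩ : {i // i ∈ S}) ∈ s
        · rw [if_pos h2]; exact hw0 _ h2
        · rw [if_neg h2]
      · rw [dif_neg h]
    have hwz : ∀ i ∉ S, w i = 0 := fun i h => by simp only [hw]; rw [dif_neg h]
    have hsub : ∀ i : {i // i ∈ S}, w (i : Fin (d+2)) = if i ∈ s then w' i else 0 := by
      intro i
      simp only [hw, dif_pos i.prop, Subtype.coe_eta]
    have hsum1 : ∑ i, w i = 1 := by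
      rw [← Finset.sum_subset (Finset.subset_univ S) (fun i _ h => hwz i h),
        ← Finset.sum_coe_sort S w, Finset.sum_congr rfl (fun i _ => hsub i)]
      rw [Finset.sum_ite_mem, Finset.univ_inter, hw1]
    have hsum2 : ∑ i, w i • bvec d i = x := by
      rw [← Finset.sum_subset (Finset.subset_univ S)
          (fun i _ h => by rw [hwz i h, zero_smul]),
        ← Finset.sum_coe_sort S (fun i => w i • bvec d i),
        Finset.sum_congr rfl (fun i (_ : i ∈ Finset.univ) => by
          rw [hsub i, ite_smul, zero_smul])]
      rw [Finset.sum_ite_mem, Finset.univ_inter, ← hx]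
    exact ⟨w, hwnn, hwz, hsum1, hsum2⟩
  · rintro ⟨w, hwnn, hwz, hsum1, hsum2⟩
    have h1 : ∑ i : {i // i ∈ S}, w (i : Fin (d+2)) = 1 := by
      rw [Finset.sum_coe_sort S w, Finset.sum_subset (Finset.subset_univ S) (fun i _ h => hwz i h),
        hsum1]
    have h2 : ∑ i : {i // i ∈ S}, w (i : Fin (d+2)) • bvec d (i : Fin (d+2)) = x := by
      rw [Finset.sum_coe_sort S (fun i => w i • bvec d i),
        Finset.sum_subset (Finset.subset_univ S) (fun i _ h => by rw [hwz i h, zero_smul]), hsum2]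
    exact mem_convexHull_of_exists_fintype (fun i : {i // i ∈ S} => w i)
      (fun i => bvec d i) (fun i => hwnn i) h1 (fun i => ⟨i, i.prop, rfl⟩) h2

lemma range_eq_image (d : ℕ) : Set.range (bvec d) = bvec d '' ↑(Finset.univ : Finset (Fin (d+2))) := by
  simp

lemma mem_lap (d : ℕ) (x : Fin d → ℝ) :
    x ∈ LapPolytope d ↔ ∃ w : Fin (d+2) → ℝ,
      (∀ i, 0 ≤ w i) ∧ ∑ i, w i = 1 ∧ ∑ i, w i • bvec d i = x := by
  rw [LapPolytope, range_eq_image, mem_conv_finset]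
  constructor
  · rintro ⟨w, h1, _, h3, h4⟩; exact ⟨w, h1, h3, h4⟩
  · rintro ⟨w, h1, h3, h4⟩; exact ⟨w, h1, fun i h => absurd (Finset.mem_univ i) h, h3, h4⟩

lemma dot_eval (d : ℕ) (a : Fin d → ℝ) (w : Fin (d+2) → ℝ) :
    ∑ k, a k * (∑ j, w j • bvec d j) k = ∑ j, w j * (∑ k, a k * bvec d j k) := by
  have h1 : ∀ k : Fin d, a k * (∑ j, w j • bvec d j) k = ∑ j, a k * (w j * bvec d j k) := by
    intro k
    rw [Finset.sum_apply, Finset.mul_sum]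
    exact Finset.sum_congr rfl fun j _ => by simp [mul_comm]
  rw [Finset.sum_congr rfl fun k _ => h1 k, Finset.sum_comm]
  exact Finset.sum_congr rfl fun j _ => by rw [Finset.mul_sum]; exact Finset.sum_congr rfl fun k _ => by ring

def pairC (d : ℕ) (ℓ₀ m₀ : Fin (d+2)) : Finset (Fin (d+2)) := ({ℓ₀, m₀} : Finset (Fin (d+2)))ᶜ

def facetF (d : ℕ) (ℓ₀ m₀ : Fin (d+2)) : Set (Fin d → ℝ) :=
  convexHull ℝ (bvec d '' ↑(pairC d ℓ₀ m₀))

lemma mem_pairC (d : ℕ) (ℓ₀ m₀ j : Fin (d+2)) :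
    j ∈ pairC d ℓ₀ m₀ ↔ ¬(j = ℓ₀ ∨ j = m₀) := by
  simp [pairC]

lemma convex_cut (d : ℕ) (a : Fin d → ℝ) (c : ℝ) :
    Convex ℝ {x : Fin d → ℝ | x ∈ LapPolytope d ∧ ∑ k, a k * x k = c} := by
  have h1 : Convex ℝ (LapPolytope d) := convex_convexHull ℝ _
  have hf : ∃ f : (Fin d → ℝ) →ₗ[ℝ] ℝ, ∀ x, f x = ∑ k, a k * x k := by
    refine ⟨∑ k, a k • (LinearMap.proj k : (Fin d → ℝ) →ₗ[ℝ] ℝ), fun x => ?_⟩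
    simp [LinearMap.sum_apply, LinearMap.proj_apply]
  obtain ⟨f, hf⟩ := hf
  have h2 : Convex ℝ {x : Fin d → ℝ | ∑ k, a k * x k = c} := by
    have := convex_hyperplane (𝕜 := ℝ) f.isLinear c
    rw [show {x : Fin d → ℝ | ∑ k, a k * x k = c} = {w | f w = c} by ext x; simp [hf]]
    exact this
  exact h1.inter h2

lemma card_pairC (d : ℕ) (ℓ₀ m₀ : Fin (d+2)) (hne : ℓ₀ ≠ m₀) : (pairC d ℓ₀ m₀).card = d := by
  rw [pairC, Finset.card_compl, Finset.card_pair hne]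
  simp

set_option maxHeartbeats 1000000 in
lemma isFacet_facetF (d : ℕ) (hd : 2 ≤ d) (he : Even d) (ℓ₀ m₀ : Fin (d+2))
    (hl : Even (ℓ₀:ℕ)) (hm : Odd (m₀:ℕ)) : IsFacetOf d (facetF d ℓ₀ m₀) := by
  classical
  have hne : ℓ₀ ≠ m₀ := by
    intro h; rw [h] at hl; exact (Nat.not_odd_iff_even.2 hl) hm
  obtain ⟨a, c, hfa⟩ := exists_functional d he ℓ₀ m₀ hl hm
  have hPsub : ∀ j : Fin (d+2), bvec d j ∈ LapPolytope d := fun j =>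
    subset_convexHull ℝ _ ⟨j, rfl⟩
  -- validity
  have hvalid : ∀ x ∈ LapPolytope d, ∑ k, a k * x k ≤ c := by
    intro x hx
    obtain ⟨w, hw0, hw1, hw2⟩ := (mem_lap d x).1 hx
    rw [← hw2, dot_eval, Finset.sum_congr rfl fun j _ => by rw [hfa j]]
    have : ∑ j, w j * (c - if j = ℓ₀ ∨ j = m₀ then 1 else 0)
        = c - ∑ j, w j * (if j = ℓ₀ ∨ j = m₀ then 1 else 0) := by
      rw [Finset.sum_congr rfl fun j _ => mul_sub (w j) c _, Finset.sum_sub_distrib,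
        ← Finset.sum_mul, hw1, one_mul]
    rw [this]
    have hnn : 0 ≤ ∑ j, w j * (if j = ℓ₀ ∨ j = m₀ then 1 else 0) :=
      Finset.sum_nonneg fun j _ => mul_nonneg (hw0 j) (by positivity)
    linarith
  -- face equality
  have hface : facetF d ℓ₀ m₀ = {x | x ∈ LapPolytope d ∧ ∑ k, a k * x k = c} := by
    apply Set.Subset.antisymm
    · apply convexHull_min _ (convex_cut d a c)
      rintro y ⟨j, hj, rfl⟩
      rw [Finset.mem_coe, mem_pairC] at hj
      refine ⟨hPsub j, ?_⟩
      rw [hfa j, if_neg hj, sub_zero]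
    · rintro x ⟨hx, hc⟩
      obtain ⟨w, hw0, hw1, hw2⟩ := (mem_lap d x).1 hx
      have hdot : ∑ j, w j * (if j = ℓ₀ ∨ j = m₀ then (1:ℝ) else 0) = 0 := by
        have h1 : ∑ k, a k * x k = c - ∑ j, w j * (if j = ℓ₀ ∨ j = m₀ then 1 else 0) := by
          rw [← hw2, dot_eval, Finset.sum_congr rfl fun j _ => by rw [hfa j],
            Finset.sum_congr rfl fun j _ => mul_sub (w j) c _, Finset.sum_sub_distrib,
            ← Finset.sum_mul, hw1, one_mul]
        rw [hc] at h1
        linarith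
      have hwz : ∀ j, j ∉ pairC d ℓ₀ m₀ → w j = 0 := by
        intro j hj
        rw [mem_pairC, not_not] at hj
        have hterm := (Finset.sum_eq_zero_iff_of_nonneg
          (fun j _ => mul_nonneg (hw0 j) (by positivity))).1 hdot j (Finset.mem_univ j)
        rw [if_pos hj, mul_one] at hterm
        exact hterm
      rw [facetF, mem_conv_finset]
      exact ⟨w, hw0, hwz, hw1, hw2⟩
  -- nonempty
  have hnonempty : (facetF d ℓ₀ m₀).Nonempty := by
    have hcard : (pairC d ℓ₀ m₀).card = d := card_pairC d ℓ₀ m₀ hne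
    have : (pairC d ℓ₀ m₀).Nonempty := Finset.card_pos.1 (by omega)
    obtain ⟨j, hj⟩ := this
    exact ⟨bvec d j, subset_convexHull ℝ _ ⟨j, by simpa using hj, rfl⟩⟩
  -- dimension
  have hdim : Module.finrank ℝ (affineSpan ℝ (facetF d ℓ₀ m₀)).direction = d - 1 := by
    rw [facetF, affineSpan_convexHull, direction_affineSpan,
      show bvec d '' ↑(pairC d ℓ₀ m₀)
        = Set.range (fun j : {j // j ∈ pairC d ℓ₀ m₀} => bvec d (j : Fin (d+2))) from
        Set.image_eq_range _ _]
    have hAI : AffineIndependent ℝ (fun j : {j // j ∈ pairC d ℓ₀ m₀} => bvec d (j : Fin (d+2))) := by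
      have hemb : ∀ j : {j // j ∈ pairC d ℓ₀ m₀}, (j : Fin (d+2)) ≠ m₀ := by
        intro j
        have := (mem_pairC d ℓ₀ m₀ j).1 j.prop
        tauto
      have hembinj : Function.Injective (fun j : {j // j ∈ pairC d ℓ₀ m₀} =>
          (⟨(j : Fin (d+2)), hemb j⟩ : {j : Fin (d+2) // j ≠ m₀})) := by
        intro j j' h
        rw [Subtype.mk.injEq] at h
        exact Subtype.ext h
      exact (ai d he m₀).comp_embedding ⟨_, hembinj⟩
    have hcard : Fintype.card {j // j ∈ pairC d ℓ₀ m₀} = (d - 1) + 1 := by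
      rw [Fintype.card_coe, card_pairC d ℓ₀ m₀ hne]
      omega
    exact hAI.finrank_vectorSpan hcard
  exact ⟨hnonempty, a, c, hvalid, hface.trans rfl, hdim⟩

set_option maxHeartbeats 1000000 in
lemma facet_is_facetF (d : ℕ) (hd : 2 ≤ d) (he : Even d) (F : Set (Fin d → ℝ))
    (hF : IsFacetOf d F) : ∃ ℓ₀ m₀ : Fin (d+2),
      Even (ℓ₀:ℕ) ∧ Odd (m₀:ℕ) ∧ F = facetF d ℓ₀ m₀ := by
  classical
  obtain ⟨hne, a, c, hvalid, hFe, hrank⟩ := hF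
  have hPsub : ∀ j : Fin (d+2), bvec d j ∈ LapPolytope d := fun j =>
    subset_convexHull ℝ _ ⟨j, rfl⟩
  set t : Fin (d+2) → ℝ := fun j => (∑ k, a k * bvec d j k) - c with htdef
  have ht : ∀ j, t j ≤ 0 := fun j => by
    have := hvalid (bvec d j) (hPsub j)
    simp only [htdef]
    linarith
  set S : Finset (Fin (d+2)) := Finset.univ.filter (fun j => ∑ k, a k * bvec d j k = c) with hSdef
  have hmemS : ∀ j, j ∈ S ↔ t j = 0 := by
    intro j
    simp only [hSdef, Finset.mem_filter, Finset.mem_univ, true_and, htdef]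
    constructor
    · intro h; rw [h]; ring
    · intro h; linarith
  -- the dependence relation applied to the functional
  have heven2 : Even (d+2) := by rcases he with ⟨e,hee⟩; exact ⟨e+1, by omega⟩
  have hdep : ∑ j : Fin (d+2), (-1:ℝ)^(j:ℕ) * t j = 0 := by
    have h1 : ∑ j : Fin (d+2), (-1:ℝ)^(j:ℕ) * (∑ k, a k * bvec d j k) = 0 := by
      have e1 : ∀ j : Fin (d+2), (-1:ℝ)^(j:ℕ) * (∑ k, a k * bvec d j k)
          = ∑ k, a k * ((-1:ℝ)^(j:ℕ) * bvec d j k) := by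
        intro j
        rw [Finset.mul_sum]
        exact Finset.sum_congr rfl fun k _ => by ring
      rw [Finset.sum_congr rfl fun j _ => e1 j, Finset.sum_comm]
      have e2 : ∀ k : Fin d, ∑ j : Fin (d+2), a k * ((-1:ℝ)^(j:ℕ) * bvec d j k) = 0 := by
        intro k
        rw [← Finset.mul_sum, dep_coord d k, mul_zero]
      rw [Finset.sum_congr rfl fun k _ => e2 k, Finset.sum_const, smul_zero]
    have h2 : ∑ j : Fin (d+2), (-1:ℝ)^(j:ℕ) * c = 0 := by
      rw [← Finset.sum_mul, signsum (d+2) heven2, zero_mul]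
    have e3 : ∀ j : Fin (d+2), (-1:ℝ)^(j:ℕ) * t j
        = (-1:ℝ)^(j:ℕ) * (∑ k, a k * bvec d j k) - (-1:ℝ)^(j:ℕ) * c := by
      intro j
      rw [htdef]
      ring
    rw [Finset.sum_congr rfl fun j _ => e3 j, Finset.sum_sub_distrib, h1, h2, sub_zero]
  -- F equals the convex hull of the vertices on the face
  have hFS : F = convexHull ℝ (bvec d '' ↑S) := by
    apply Set.Subset.antisymm
    · intro x hx
      rw [hFe] at hx
      obtain ⟨hxP, hxc⟩ := hx
      obtain ⟨w, hw0, hw1, hw2⟩ := (mem_lap d x).1 hxP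
      have hdot : ∑ j : Fin (d+2), w j * t j = 0 := by
        have h1 : ∑ k, a k * x k = ∑ j, w j * (∑ k, a k * bvec d j k) := by
          rw [← hw2, dot_eval]
        have h2 : ∑ j : Fin (d+2), w j * t j = ∑ j, w j * (∑ k, a k * bvec d j k) - c := by
          rw [htdef]
          have : ∀ j : Fin (d+2), w j * ((∑ k, a k * bvec d j k) - c)
              = w j * (∑ k, a k * bvec d j k) - w j * c := fun j => by ring
          rw [Finset.sum_congr rfl fun j _ => this j, Finset.sum_sub_distrib,
            ← Finset.sum_mul, hw1, one_mul]
        rw [h2, ← h1, hxc]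
        ring
      have hwz : ∀ j, j ∉ S → w j = 0 := by
        intro j hj
        have hdot' : ∑ j : Fin (d+2), w j * -(t j) = 0 := by
          rw [Finset.sum_congr rfl fun j _ => (by ring : w j * -(t j) = -(w j * t j)),
            Finset.sum_neg_distrib, hdot, neg_zero]
        have hterm := (Finset.sum_eq_zero_iff_of_nonneg
          (fun j _ => mul_nonneg (hw0 j) (neg_nonneg.2 (ht j)))).1 hdot' j (Finset.mem_univ j)
        have htj : t j ≠ 0 := fun h => hj ((hmemS j).2 h)
        rcases mul_eq_zero.1 hterm with h | h
        · exact h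
        · exact absurd (neg_eq_zero.1 h) htj
      rw [mem_conv_finset]
      exact ⟨w, hw0, hwz, hw1, hw2⟩
    · apply convexHull_min _ (by rw [hFe]; exact convex_cut d a c)
      rintro y ⟨j, hj, rfl⟩
      rw [Finset.mem_coe, hmemS] at hj
      rw [hFe]
      refine ⟨hPsub j, by simp only [htdef] at hj; linarith⟩
  -- the complement of S has exactly two elements, of opposite parity
  have hsum0 : ∑ j ∈ Sᶜ, (-1:ℝ)^(j:ℕ) * t j = 0 := by
    rw [Finset.sum_subset (Finset.subset_univ Sᶜ)
      (fun j _ hj => by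
        rw [Finset.notMem_compl] at hj
        rw [(hmemS j).1 hj, mul_zero])]
    exact hdep
  have htneg : ∀ j ∈ Sᶜ, t j < 0 := by
    intro j hj
    rw [Finset.mem_compl] at hj
    have := ht j
    have htj : t j ≠ 0 := fun h => hj ((hmemS j).2 h)
    cases lt_or_eq_of_le this with
    | inl h => exact h
    | inr h => exact absurd h htj
  -- rule out |Sᶜ| ≥ 3 i.e. S.card ≤ d-1
  have hcard_ge : d ≤ S.card := by
    by_contra hlt
    push_neg at hlt
    have hSne : S.Nonempty := by
      rcases Finset.eq_empty_or_nonempty S with h | h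
      · exfalso
        obtain ⟨x, hx⟩ := hne
        rw [hFS, h] at hx
        simpa using hx
      · exact h
    obtain ⟨n, hn⟩ : ∃ n, S.card = n + 1 :=
      ⟨S.card - 1, by have := Finset.card_pos.2 hSne; omega⟩
    have hle := finrank_vectorSpan_image_finset_le ℝ (bvec d) S hn
    rw [← Finset.coe_image] at hFS
    rw [hFS, affineSpan_convexHull, direction_affineSpan] at hrank
    rw [hrank] at hle
    have hc1 : S.card = n + 1 := hn
    have hc2 : S.card < d := hlt
    omega
  have hcard_le : S.card ≤ d := by
    by_contra hgt
    push_neg at hgt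
    -- S.card ≥ d+1, so Sᶜ.card ≤ 1
    have hcc : Sᶜ.card ≤ 1 := by
      have h := Finset.card_compl S
      rw [Fintype.card_fin] at h
      omega
    rcases Nat.le_one_iff_eq_zero_or_eq_one.1 hcc with h0 | h1
    · -- S = univ : F would have full dimension
      have hSuniv : S = Finset.univ := by
        have h : Sᶜ = ∅ := Finset.card_eq_zero.1 h0
        have h2 : Sᶜᶜ = ∅ᶜ := by rw [h]
        rwa [compl_compl, Finset.compl_empty] at h2
      have hfull : Module.finrank ℝ (affineSpan ℝ F).direction = d := by
        rw [hFS, hSuniv, affineSpan_convexHull, direction_affineSpan]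
        have h1 : bvec d '' ↑(Finset.univ : Finset (Fin (d+2))) = Set.range (bvec d) := by simp
        rw [h1]
        -- contains d+1 affinely independent points
        have hAI := ai d he (Fin.last (d+1))
        have hcard : Fintype.card {j : Fin (d+2) // j ≠ Fin.last (d+1)} = d + 1 := by
          simp [Fintype.card_subtype_compl]
        have hle1 : Module.finrank ℝ (vectorSpan ℝ (Set.range
            (fun j : {j : Fin (d+2) // j ≠ Fin.last (d+1)} => bvec d (j : Fin (d+2))))) = d :=
          hAI.finrank_vectorSpan hcard
        have hmono : vectorSpan ℝ (Set.range
            (fun j : {j : Fin (d+2) // j ≠ Fin.last (d+1)} => bvec d (j : Fin (d+2))))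
            ≤ vectorSpan ℝ (Set.range (bvec d)) := by
          apply vectorSpan_mono
          rintro y ⟨j, rfl⟩
          exact ⟨j, rfl⟩
        have hge := Submodule.finrank_mono hmono
        rw [hle1] at hge
        have hub : Module.finrank ℝ (vectorSpan ℝ (Set.range (bvec d))) ≤ d := by
          have := Submodule.finrank_le (vectorSpan ℝ (Set.range (bvec d)))
          simpa [Module.finrank_pi] using this
        omega
      rw [hrank] at hfull
      omega
    · -- Sᶜ = {m} : then t m = 0, contradiction
      obtain ⟨m, hm⟩ := Finset.card_eq_one.1 h1
      have : (-1:ℝ)^(m:ℕ) * t m = 0 := by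
        rw [hm, Finset.sum_singleton] at hsum0
        exact hsum0
      rcases mul_eq_zero.1 this with h | h
      · exact absurd h (by positivity)
      · exact absurd h (ne_of_lt (htneg m (by rw [hm]; exact Finset.mem_singleton_self m)))
  -- now Sᶜ has exactly two elements
  have hcc2 : Sᶜ.card = 2 := by
    have h := Finset.card_compl S
    rw [Fintype.card_fin] at h
    omega
  obtain ⟨j₁, j₂, hj12, hcompl⟩ := Finset.card_eq_two.1 hcc2
  have hj1 : j₁ ∈ Sᶜ := by rw [hcompl]; exact Finset.mem_insert_self _ _
  have hj2 : j₂ ∈ Sᶜ := by rw [hcompl]; exact Finset.mem_insert_of_mem (Finset.mem_singleton_self _)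
  have hpairsum : (-1:ℝ)^(j₁:ℕ) * t j₁ + (-1:ℝ)^(j₂:ℕ) * t j₂ = 0 := by
    rw [hcompl, Finset.sum_pair hj12] at hsum0
    exact hsum0
  have ht1 := htneg j₁ hj1
  have ht2 := htneg j₂ hj2
  -- opposite parity
  have hpar : ((Even (j₁:ℕ) ∧ Odd (j₂:ℕ)) ∨ (Odd (j₁:ℕ) ∧ Even (j₂:ℕ))) := by
    by_contra hcon
    push_neg at hcon
    rcases Nat.even_or_odd (j₁:ℕ) with h1 | h1
    · have h2 : Even (j₂:ℕ) := Nat.not_odd_iff_even.1 (hcon.1 h1)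
      rw [h1.neg_one_pow, h2.neg_one_pow, one_mul, one_mul] at hpairsum
      linarith
    · have h2 : Odd (j₂:ℕ) := Nat.not_even_iff_odd.1 (fun h => (hcon.2 h1) h)
      rw [h1.neg_one_pow, h2.neg_one_pow] at hpairsum
      linarith
  have hSpair : S = pairC d j₁ j₂ := by
    rw [pairC, ← hcompl, compl_compl]
  rcases hpar with ⟨h1, h2⟩ | ⟨h1, h2⟩
  · exact ⟨j₁, j₂, h1, h2, by rw [hFS, hSpair]; rfl⟩
  · refine ⟨j₂, j₁, h2, h1, by rw [hFS, hSpair]; simp only [facetF, pairC]; rw [Finset.pair_comm j₂ j₁]⟩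

lemma not_mem_conv (d : ℕ) (he : Even d) (S : Finset (Fin (d+2))) (j m : Fin (d+2))
    (hj : j ∉ S) (hm : m ∉ S) (hjm : j ≠ m) : bvec d j ∉ convexHull ℝ (bvec d '' ↑S) := by
  classical
  intro hmem
  obtain ⟨w, hw0, hwz, hw1, hw2⟩ := (mem_conv_finset d S _).1 hmem
  set lam : Fin (d+2) → ℝ := fun i => w i - (if i = j then 1 else 0) with hlam
  have hlm : lam m = 0 := by
    simp only [hlam]
    rw [hwz m hm, if_neg (Ne.symm hjm)]
    ring
  have h0 : ∑ i, lam i = 0 := by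
    simp only [hlam]
    rw [Finset.sum_sub_distrib, hw1, Finset.sum_ite_eq' Finset.univ j (fun _ => (1:ℝ)),
      if_pos (Finset.mem_univ j)]
    ring
  have h1 : ∀ k : Fin d, ∑ i, lam i * bvec d i k = 0 := by
    intro k
    have hx := congrFun hw2 k
    rw [Finset.sum_apply] at hx
    simp only [hlam]
    have e1 : ∀ i : Fin (d+2), (w i - if i = j then 1 else 0) * bvec d i k
        = w i * bvec d i k - (if i = j then 1 else 0) * bvec d i k := fun i => by ring
    rw [Finset.sum_congr rfl fun i _ => e1 i, Finset.sum_sub_distrib]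
    have e2 : ∑ i, (if i = j then (1:ℝ) else 0) * bvec d i k = bvec d j k := by
      rw [Finset.sum_congr rfl fun i _ => (ite_mul _ _ _ _).trans (by rw [one_mul, zero_mul])]
      rw [Finset.sum_ite_eq' Finset.univ j (fun i => bvec d i k), if_pos (Finset.mem_univ j)]
    rw [e2]
    have e3 : ∑ i, w i * bvec d i k = bvec d j k := by
      rw [← hx]
      exact Finset.sum_congr rfl fun i _ => by simp
    rw [e3]
    ring
  have := gp d he lam m hlm h0 h1
  have hzj : lam j = 0 := by rw [this]; rfl
  simp only [hlam] at hzj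
  rw [hwz j hj] at hzj
  simp at hzj

lemma pairC_subset (d : ℕ) (hd : 2 ≤ d) (he : Even d) (ℓ₀ m₀ ℓ₁ m₁ : Fin (d+2))
    (hl1 : Even (ℓ₁:ℕ)) (hm1 : Odd (m₁:ℕ))
    (h : facetF d ℓ₀ m₀ = facetF d ℓ₁ m₁) :
    pairC d ℓ₀ m₀ ⊆ pairC d ℓ₁ m₁ := by
  intro i hi
  by_contra hiC
  have hne1 : ℓ₁ ≠ m₁ := fun hh => (by rw [hh] at hl1; exact (Nat.not_odd_iff_even.2 hl1) hm1)
  have hmemF : bvec d i ∈ facetF d ℓ₁ m₁ := by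
    rw [← h]
    exact subset_convexHull ℝ _ ⟨i, by simpa using hi, rfl⟩
  rw [mem_pairC, not_not] at hiC
  rcases hiC with rfl | rfl
  · exact not_mem_conv d he (pairC d i m₁) i m₁
      (by rw [mem_pairC]; tauto) (by rw [mem_pairC]; tauto) hne1 hmemF
  · exact not_mem_conv d he (pairC d ℓ₁ i) i ℓ₁
      (by rw [mem_pairC]; tauto) (by rw [mem_pairC]; tauto) (Ne.symm hne1) hmemF

lemma facetF_inj (d : ℕ) (hd : 2 ≤ d) (he : Even d) (ℓ₀ m₀ ℓ₁ m₁ : Fin (d+2))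
    (hl0 : Even (ℓ₀:ℕ)) (hm0 : Odd (m₀:ℕ)) (hl1 : Even (ℓ₁:ℕ)) (hm1 : Odd (m₁:ℕ))
    (h : facetF d ℓ₀ m₀ = facetF d ℓ₁ m₁) : ℓ₀ = ℓ₁ ∧ m₀ = m₁ := by
  have hne0 : ℓ₀ ≠ m₀ := fun hh => (by rw [hh] at hl0; exact (Nat.not_odd_iff_even.2 hl0) hm0)
  have hne1 : ℓ₁ ≠ m₁ := fun hh => (by rw [hh] at hl1; exact (Nat.not_odd_iff_even.2 hl1) hm1)
  have h01 := pairC_subset d hd he ℓ₀ m₀ ℓ₁ m₁ hl1 hm1 h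
  have h10 := pairC_subset d hd he ℓ₁ m₁ ℓ₀ m₀ hl0 hm0 h.symm
  have hCeq : pairC d ℓ₀ m₀ = pairC d ℓ₁ m₁ := Finset.Subset.antisymm h01 h10
  have hpair : ({ℓ₀, m₀} : Finset (Fin (d+2))) = {ℓ₁, m₁} := by
    have := congrArg (fun s : Finset (Fin (d+2)) => sᶜ) hCeq
    simpa [pairC, compl_compl] using this
  have hl : ℓ₀ = ℓ₁ := by
    have : ℓ₀ ∈ ({ℓ₁, m₁} : Finset (Fin (d+2))) := by
      rw [← hpair]; exact Finset.mem_insert_self _ _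
    rcases Finset.mem_insert.1 this with h | h
    · exact h
    · rw [Finset.mem_singleton] at h
      exfalso
      rw [h] at hl0
      exact (Nat.not_odd_iff_even.2 hl0) hm1
  have hm : m₀ = m₁ := by
    have : m₀ ∈ ({ℓ₁, m₁} : Finset (Fin (d+2))) := by
      rw [← hpair]; exact Finset.mem_insert_of_mem (Finset.mem_singleton_self _)
    rcases Finset.mem_insert.1 this with h | h
    · exfalso
      rw [h] at hm0
      exact (Nat.not_odd_iff_even.2 hl1) hm0
    · exact Finset.mem_singleton.1 h
  exact ⟨hl, hm⟩

lemma sum_ite_even (n : ℕ) : ∑ i ∈ Finset.range n, (if Even i then 1 else 0) = (n+1)/2 := by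
  induction n with
  | zero => simp
  | succ n ih =>
    rw [Finset.sum_range_succ, ih]
    by_cases h : Even n
    · rw [if_pos h]
      rw [Nat.even_iff] at h
      omega
    · rw [if_neg h]
      rw [Nat.not_even_iff] at h
      omega

lemma sum_ite_odd (n : ℕ) : ∑ i ∈ Finset.range n, (if Odd i then 1 else 0) = n/2 := by
  induction n with
  | zero => simp
  | succ n ih =>
    rw [Finset.sum_range_succ, ih]
    by_cases h : Odd n
    · rw [if_pos h]
      rw [Nat.odd_iff] at h
      omega
    · rw [if_neg h]
      rw [Nat.not_odd_iff] at h
      omega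

lemma card_evens (n : ℕ) :
    (Finset.univ.filter (fun ℓ : Fin n => Even (ℓ:ℕ))).card = (n+1)/2 := by
  classical
  rw [Finset.card_filter]
  rw [Fin.sum_univ_eq_sum_range (fun i => if Even i then 1 else 0)]
  exact sum_ite_even n

lemma card_odds (n : ℕ) :
    (Finset.univ.filter (fun m : Fin n => Odd (m:ℕ))).card = n/2 := by
  classical
  rw [Finset.card_filter]
  rw [Fin.sum_univ_eq_sum_range (fun i => if Odd i then 1 else 0)]
  exact sum_ite_odd n


/-- for even `d ≥ 2`, the `d`-th Laplacian polytope of the boundary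
of the `(d+1)`-simplex has exactly `(d+2)²/4` facets. -/
theorem stmt14 (d : ℕ) (hd : 2 ≤ d) (he : Even d) :
    {F : Set (Fin d → ℝ) | IsFacetOf d F}.ncard = (d+2)^2/4 := by
  classical
  set Qfin : Finset (Fin (d+2) × Fin (d+2)) :=
    Finset.univ.filter (fun p => Even (p.1:ℕ) ∧ Odd (p.2:ℕ)) with hQdef
  have hmemQ : ∀ p : Fin (d+2) × Fin (d+2), p ∈ Qfin ↔ Even (p.1:ℕ) ∧ Odd (p.2:ℕ) := by
    intro p
    simp [hQdef]
  have hset : {F : Set (Fin d → ℝ) | IsFacetOf d F}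
      = (fun p : Fin (d+2) × Fin (d+2) => facetF d p.1 p.2) '' ↑Qfin := by
    ext F
    simp only [Set.mem_setOf_eq, Set.mem_image, Finset.mem_coe]
    constructor
    · intro hF
      obtain ⟨ℓ₀, m₀, h1, h2, h3⟩ := facet_is_facetF d hd he F hF
      exact ⟨(ℓ₀, m₀), (hmemQ _).2 ⟨h1, h2⟩, h3.symm⟩
    · rintro ⟨⟨ℓ₀, m₀⟩, hp, rfl⟩
      obtain ⟨h1, h2⟩ := (hmemQ _).1 hp
      exact isFacet_facetF d hd he ℓ₀ m₀ h1 h2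
  have hinj : Set.InjOn (fun p : Fin (d+2) × Fin (d+2) => facetF d p.1 p.2) ↑Qfin := by
    rintro ⟨ℓ₀, m₀⟩ hp ⟨ℓ₁, m₁⟩ hq h
    rw [Finset.mem_coe, hmemQ] at hp hq
    obtain ⟨h1, h2⟩ := facetF_inj d hd he ℓ₀ m₀ ℓ₁ m₁ hp.1 hp.2 hq.1 hq.2 h
    simp [Prod.ext_iff, h1, h2]
  rw [hset, Set.ncard_image_of_injOn hinj, Set.ncard_coe_finset]
  have hQ : Qfin = (Finset.univ.filter (fun ℓ : Fin (d+2) => Even (ℓ:ℕ)))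
      ×ˢ (Finset.univ.filter (fun m : Fin (d+2) => Odd (m:ℕ))) := by
    ext p
    simp [hQdef, Finset.mem_product]
  rw [hQ, Finset.card_product, card_evens, card_odds]
  obtain ⟨e, hde⟩ := he
  subst hde
  have h1 : (e+e+2+1)/2 = e+1 := by omega
  have h2 : (e+e+2)/2 = e+1 := by omega
  rw [h1, h2, show (e+e+2)^2 = ((e+1)*(e+1))*4 by ring, Nat.mul_div_cancel _ (by norm_num)]
end

section
/- Let d ≥ 2 be even. The d-th Laplacian polytope of the boundary of the (d+1)-simplex is combinatorially equivalent to a d-dimensional cyclic polytope on d+2 vertices (it is of Grünbaum type T^d_{d/2}). -/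
open Matrix

/-- The `d+2` points on the moment curve `t ↦ (t, t², …, t^d)` at `t = 1,…,d+2`,
whose convex hull is the cyclic polytope `C(d, d+2)`. -/
def cyc (d : ℕ) (ℓ : Fin (d+2)) : Fin d → ℝ := fun k => ((ℓ:ℝ)+1)^((k:ℕ)+1)

open Finset

section Aux

variable {d : ℕ}


lemma altsum : ∀ m : ℕ, ∀ j : ℕ, j < m →
    ∑ i ∈ Finset.range (m+1), (-1:ℝ)^i * (m.choose i) * ((i:ℝ)+1)^j = 0 := by
  intro m
  induction m with
  | zero => omega
  | succ m IH =>
    intro j hj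
    have key : ∑ i ∈ Finset.range (m+2), (-1:ℝ)^i * ((m+1).choose i) * ((i:ℝ)+1)^j
        = ∑ i ∈ Finset.range (m+1), (-1:ℝ)^i * (m.choose i) *
            (((i:ℝ)+1)^j - (((i:ℝ)+1)+1)^j) := by
      rw [Finset.sum_range_succ' (fun i => (-1:ℝ)^i * ((m+1).choose i) * ((i:ℝ)+1)^j) (m+1)]
      have h1 : ∀ i ∈ Finset.range (m+1),
          (-1:ℝ)^(i+1) * (((m+1).choose (i+1):ℕ):ℝ) * (((i+1:ℕ):ℝ)+1)^j
          = -((-1:ℝ)^i * (m.choose i) * (((i:ℝ)+1)+1)^j)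
            + (-1:ℝ)^(i+1) * (m.choose (i+1)) * (((i:ℝ)+1)+1)^j := by
        intro i _
        rw [Nat.choose_succ_succ]
        push_cast
        ring
      rw [Finset.sum_congr rfl h1, Finset.sum_add_distrib]
      have h2 : ∑ i ∈ Finset.range (m+1), (-1:ℝ)^(i+1) * (m.choose (i+1)) * (((i:ℝ)+1)+1)^j
          = ∑ i ∈ Finset.range (m+2), (-1:ℝ)^i * (m.choose i) * ((i:ℝ)+1)^j
            - (-1:ℝ)^0 * (m.choose 0) * ((0:ℝ)+1)^j := by
        rw [Finset.sum_range_succ' (fun i => (-1:ℝ)^i * (m.choose i) * ((i:ℝ)+1)^j) (m+1)]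
        have : ∀ i ∈ Finset.range (m+1),
            (-1:ℝ)^(i+1) * (((m.choose (i+1)):ℕ):ℝ) * (((i+1:ℕ):ℝ)+1)^j
            = (-1:ℝ)^(i+1) * (m.choose (i+1)) * (((i:ℝ)+1)+1)^j := by
          intro i _; push_cast; ring
        rw [Finset.sum_congr rfl this]
        ring
      rw [h2]
      have h3 : ∑ i ∈ Finset.range (m+2), (-1:ℝ)^i * (m.choose i) * ((i:ℝ)+1)^j
          = ∑ i ∈ Finset.range (m+1), (-1:ℝ)^i * (m.choose i) * ((i:ℝ)+1)^j := by
        rw [Finset.sum_range_succ]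
        simp [Nat.choose_eq_zero_of_lt]
      rw [h3]
      rw [Finset.sum_congr rfl (fun i _ => (mul_sub ((-1:ℝ)^i * (m.choose i)) _ _ :
        (-1:ℝ)^i * (m.choose i) * (((i:ℝ)+1)^j - (((i:ℝ)+1)+1)^j) = _))]
      rw [Finset.sum_sub_distrib, Finset.sum_neg_distrib]
      simp only [Nat.choose_zero_right, Nat.cast_one, one_pow, mul_one, pow_zero, one_mul]
      ring
    rw [key]
    have expand : ∀ i : ℕ, ((i:ℝ)+1)^j - (((i:ℝ)+1)+1)^j
        = -∑ r ∈ Finset.range j, (j.choose r : ℝ) * ((i:ℝ)+1)^r := by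
      intro i
      have hb : (((i:ℝ)+1)+1)^j = ∑ r ∈ Finset.range (j+1), ((i:ℝ)+1)^r * (1:ℝ)^(j-r) * (j.choose r) := by
        rw [add_pow]
      rw [hb, Finset.sum_range_succ]
      simp only [one_pow, mul_one, Nat.choose_self, Nat.cast_one]
      have : ∑ x ∈ Finset.range j, ((i:ℝ)+1)^x * (j.choose x : ℝ)
          = ∑ r ∈ Finset.range j, (j.choose r : ℝ) * ((i:ℝ)+1)^r :=
        Finset.sum_congr rfl (fun r _ => mul_comm _ _)
      rw [this]
      ring
    rw [Finset.sum_congr rfl (fun i _ => by rw [expand i])]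
    have swap : ∑ i ∈ Finset.range (m+1), (-1:ℝ)^i * (m.choose i) *
        (-∑ r ∈ Finset.range j, (j.choose r : ℝ) * ((i:ℝ)+1)^r)
        = -∑ r ∈ Finset.range j, (j.choose r : ℝ) *
            ∑ i ∈ Finset.range (m+1), (-1:ℝ)^i * (m.choose i) * ((i:ℝ)+1)^r := by
      calc ∑ i ∈ Finset.range (m+1), (-1:ℝ)^i * (m.choose i) *
            (-∑ r ∈ Finset.range j, (j.choose r : ℝ) * ((i:ℝ)+1)^r)
          = ∑ i ∈ Finset.range (m+1), ∑ r ∈ Finset.range j,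
              -((j.choose r : ℝ) * ((-1:ℝ)^i * (m.choose i) * ((i:ℝ)+1)^r)) :=
            Finset.sum_congr rfl (fun i _ => by
              rw [mul_neg, Finset.mul_sum, ← Finset.sum_neg_distrib]
              rw [show ∑ x ∈ Finset.range j, -((-1:ℝ)^i * (m.choose i) * ((j.choose x:ℝ) * ((i:ℝ)+1)^x))
                  = ∑ r ∈ Finset.range j, -((j.choose r : ℝ) * ((-1:ℝ)^i * (m.choose i) * ((i:ℝ)+1)^r))
                from Finset.sum_congr rfl (fun r _ => by ring)])
        _ = ∑ r ∈ Finset.range j, ∑ i ∈ Finset.range (m+1),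
              -((j.choose r : ℝ) * ((-1:ℝ)^i * (m.choose i) * ((i:ℝ)+1)^r)) := Finset.sum_comm
        _ = -∑ r ∈ Finset.range j, (j.choose r : ℝ) *
              ∑ i ∈ Finset.range (m+1), (-1:ℝ)^i * (m.choose i) * ((i:ℝ)+1)^r := by
            rw [← Finset.sum_neg_distrib]
            exact Finset.sum_congr rfl (fun r _ => by
              rw [Finset.mul_sum, ← Finset.sum_neg_distrib])
    rw [swap]
    rw [Finset.sum_congr rfl (fun r hr => by
      rw [IH r (by have := Finset.mem_range.1 hr; omega), mul_zero])]
    simp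

lemma mem_hull_iff [NeZero n] (v : Fin n → Fin d → ℝ) (S : Set (Fin n)) (x : Fin d → ℝ) :
    x ∈ convexHull ℝ (v '' S) ↔ ∃ w : Fin n → ℝ, (∀ i, 0 ≤ w i) ∧ (∀ i ∉ S, w i = 0) ∧
      ∑ i, w i = 1 ∧ ∑ i, w i • v i = x := by
  classical
  constructor
  · intro hx
    rw [_root_.convexHull_eq] at hx
    obtain ⟨ι, t, w, z, hw₀, hw₁, hz, hx⟩ := hx
    -- choose for each i ∈ t an index in S
    have : Nonempty (Fin n) := ⟨⟨0, Nat.pos_of_ne_zero (NeZero.ne n)⟩⟩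
    have hch : ∀ i : ι, ∃ j : Fin n, i ∈ t → (j ∈ S ∧ v j = z i) := by
      intro i
      by_cases hi : i ∈ t
      · obtain ⟨j, hj, hvj⟩ := hz i hi
        exact ⟨j, fun _ => ⟨hj, hvj⟩⟩
      · exact ⟨Classical.arbitrary _, fun h => absurd h hi⟩
    choose f hf using hch
    have hfS : ∀ i ∈ t, f i ∈ S := fun i hi => (hf i hi).1
    have hfv : ∀ i ∈ t, v (f i) = z i := fun i hi => (hf i hi).2
    refine ⟨fun j => ∑ i ∈ t.filter (fun i => f i = j), w i, ?_, ?_, ?_, ?_⟩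
    · intro j
      exact Finset.sum_nonneg (fun i hi => hw₀ i (Finset.mem_filter.1 hi).1)
    · intro j hj
      apply Finset.sum_eq_zero
      intro i hi
      obtain ⟨hit, hfi⟩ := Finset.mem_filter.1 hi
      exact absurd (hfi ▸ hfS i hit) hj
    · rw [← hw₁]
      exact (Finset.sum_fiberwise t f w)
    · rw [← hx, Finset.centerMass, hw₁, inv_one, one_smul]
      rw [show ∑ j : Fin n, (∑ i ∈ t.filter (fun i => f i = j), w i) • v j
          = ∑ j : Fin n, ∑ i ∈ t.filter (fun i => f i = j), w i • v j from
        Finset.sum_congr rfl (fun j _ => by rw [Finset.sum_smul])]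
      rw [show ∑ j : Fin n, ∑ i ∈ t.filter (fun i => f i = j), w i • v j
          = ∑ j : Fin n, ∑ i ∈ t.filter (fun i => f i = j), w i • z i from
        Finset.sum_congr rfl (fun j _ => Finset.sum_congr rfl (fun i hi => by
          obtain ⟨hit, hfi⟩ := Finset.mem_filter.1 hi
          rw [← hfv i hit, hfi]))]
      exact Finset.sum_fiberwise t f (fun i => w i • z i)
  · rintro ⟨w, hw₀, hwS, hw₁, rfl⟩
    have ht : ∀ i ∈ Finset.univ.filter (fun i => (i:Fin n) ∈ S), v i ∈ v '' S := by
      intro i hi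
      exact Set.mem_image_of_mem v (Finset.mem_filter.1 hi).2
    have hsum : ∑ i ∈ Finset.univ.filter (fun i => i ∈ S), w i = 1 := by
      rw [← hw₁]
      apply Finset.sum_subset (Finset.filter_subset _ _)
      intro i _ hi
      exact hwS i (by simpa using hi)
    have := Finset.centerMass_mem_convexHull (Finset.univ.filter (fun i => i ∈ S))
      (fun i hi => hw₀ i) (by rw [hsum]; norm_num) ht
    rw [Finset.centerMass, hsum, inv_one, one_smul] at this
    convert this using 1
    symm
    apply Finset.sum_subset (Finset.filter_subset _ _)
    intro i _ hi
    rw [hwS i (by simpa using hi), zero_smul]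

/-- key surjectivity lemma -/
lemma exists_functional_s15 (v : Fin (d+2) → Fin d → ℝ) (c : Fin (d+2) → ℝ) (hc : c ≠ 0)
    (hc0 : ∑ i, c i = 0) (hcv : ∑ i, c i • v i = 0)
    (hker : ∀ w : Fin (d+2) → ℝ, ∑ i, w i = 0 → ∑ i, w i • v i = 0 → ∃ t : ℝ, w = t • c)
    (u : Fin (d+2) → ℝ) (hu : ∑ i, c i * u i = 0) :
    ∃ (g : Fin d → ℝ) (a : ℝ), ∀ i, (∑ k, g k * v i k) + a = u i := by
  classical
  -- the map M
  let M : (Fin (d+2) → ℝ) →ₗ[ℝ] (Fin d → ℝ) × ℝ :=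
    { toFun := fun w => (∑ i, w i • v i, ∑ i, w i)
      map_add' := by
        intro w w'; simp [add_smul, Finset.sum_add_distrib]
      map_smul' := by
        intro t w; simp [smul_smul, Finset.smul_sum, Finset.mul_sum] }
  have hkerM : LinearMap.ker M = Submodule.span ℝ {c} := by
    apply le_antisymm
    · intro w hw
      rw [LinearMap.mem_ker] at hw
      obtain ⟨t, ht⟩ := hker w (congrArg Prod.snd hw) (congrArg Prod.fst hw)
      rw [ht]
      exact Submodule.smul_mem _ t (Submodule.mem_span_singleton_self c)
    · rw [Submodule.span_le, Set.singleton_subset_iff]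
      simp only [SetLike.mem_coe, LinearMap.mem_ker, M]
      exact Prod.ext hcv hc0
  have hrank : Module.finrank ℝ (LinearMap.range M) = d + 1 := by
    have h1 := LinearMap.finrank_range_add_finrank_ker M
    rw [hkerM, finrank_span_singleton hc, Module.finrank_fin_fun] at h1
    omega
  have hMtop : LinearMap.range M = ⊤ := by
    apply Submodule.eq_top_of_finrank_eq
    rw [hrank, Module.finrank_prod, Module.finrank_fin_fun, Module.finrank_self]
  -- the map Φ
  let Φ : ((Fin d → ℝ) × ℝ) →ₗ[ℝ] (Fin (d+2) → ℝ) :=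
    { toFun := fun p => fun i => (∑ k, p.1 k * v i k) + p.2
      map_add' := by
        intro p q; funext i; simp [add_mul, Finset.sum_add_distrib]; ring
      map_smul' := by
        intro t p; funext i; simp [Finset.mul_sum, mul_assoc, mul_add] }
  have hkerΦ : LinearMap.ker Φ = ⊥ := by
    rw [LinearMap.ker_eq_bot']
    intro p hp
    have hp' : ∀ i, (∑ k, p.1 k * v i k) + p.2 = 0 := fun i => congrFun hp i
    obtain ⟨w, hw⟩ : ∃ w, M w = (p.1, p.2) := by
      have : (p.1, p.2) ∈ LinearMap.range M := hMtop ▸ Submodule.mem_top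
      exact this
    have hw1 : ∑ i, w i • v i = p.1 := congrArg Prod.fst hw
    have hw2 : ∑ i, w i = p.2 := congrArg Prod.snd hw
    have key : (∑ k, p.1 k * p.1 k) + p.2 * p.2 = 0 := by
      have : ∑ i, w i * ((∑ k, p.1 k * v i k) + p.2) = 0 := by
        simp only [hp', mul_zero, Finset.sum_const_zero]
      calc (∑ k, p.1 k * p.1 k) + p.2 * p.2
          = (∑ k, p.1 k * (∑ i, w i • v i) k) + p.2 * (∑ i, w i) := by rw [hw1, hw2]
        _ = ∑ i, w i * ((∑ k, p.1 k * v i k) + p.2) := by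
            simp only [Finset.sum_apply, Pi.smul_apply, smul_eq_mul, Finset.mul_sum,
              mul_add, Finset.sum_add_distrib]
            rw [Finset.sum_comm]
            congr 1
            · apply Finset.sum_congr rfl; intro i _; apply Finset.sum_congr rfl; intro k _; ring
            · apply Finset.sum_congr rfl; intro i _; ring
        _ = 0 := this
    have h1 : ∑ k, p.1 k * p.1 k = 0 ∧ p.2 * p.2 = 0 := by
      constructor <;> nlinarith [Finset.sum_nonneg (fun k (_ : k ∈ Finset.univ) => mul_self_nonneg (p.1 k)),
        mul_self_nonneg p.2]
    have hp1 : p.1 = 0 := by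
      funext k
      have := (Finset.sum_eq_zero_iff_of_nonneg (fun k _ => mul_self_nonneg (p.1 k))).1 h1.1 k (Finset.mem_univ k)
      exact mul_self_eq_zero.1 this
    have hp2 : p.2 = 0 := mul_self_eq_zero.1 h1.2
    exact Prod.ext hp1 hp2
  -- the hyperplane
  let f : (Fin (d+2) → ℝ) →ₗ[ℝ] ℝ :=
    { toFun := fun w => ∑ i, c i * w i
      map_add' := by intro w w'; simp [mul_add, Finset.sum_add_distrib]
      map_smul' := by intro t w; simp [Finset.mul_sum]; apply Finset.sum_congr rfl; intro i _; ring }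
  have hfsurj : LinearMap.range f = ⊤ := by
    rw [LinearMap.range_eq_top]
    intro r
    refine ⟨(r / (∑ i, c i * c i)) • c, ?_⟩
    have hcc : ∑ i, c i * c i ≠ 0 := by
      intro h
      apply hc
      funext i
      have := (Finset.sum_eq_zero_iff_of_nonneg (fun i _ => mul_self_nonneg (c i))).1 h i (Finset.mem_univ i)
      exact mul_self_eq_zero.1 this
    simp only [f, LinearMap.coe_mk, AddHom.coe_mk, Pi.smul_apply, smul_eq_mul]
    rw [show ∑ i, c i * (r / (∑ i, c i * c i) * c i) = (r / (∑ i, c i * c i)) * ∑ i, c i * c i by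
      rw [Finset.mul_sum]; apply Finset.sum_congr rfl; intro i _; ring]
    field_simp
    exact mul_div_cancel_right₀ r (by simpa [sq] using hcc)
  have hkerf : Module.finrank ℝ (LinearMap.ker f) = d + 1 := by
    have h1 := LinearMap.finrank_range_add_finrank_ker f
    rw [hfsurj, Module.finrank_fin_fun] at h1
    rw [finrank_top, Module.finrank_self] at h1
    omega
  have hsub : LinearMap.range Φ ≤ LinearMap.ker f := by
    rintro _ ⟨p, rfl⟩
    simp only [LinearMap.mem_ker, f, Φ, LinearMap.coe_mk, AddHom.coe_mk]
    calc ∑ i, c i * ((∑ k, p.1 k * v i k) + p.2)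
        = (∑ k, p.1 k * (∑ i, c i • v i) k) + p.2 * (∑ i, c i) := by
          simp only [Finset.sum_apply, Pi.smul_apply, smul_eq_mul, Finset.mul_sum,
            mul_add, Finset.sum_add_distrib]
          rw [Finset.sum_comm]
          congr 1
          · apply Finset.sum_congr rfl; intro i _; apply Finset.sum_congr rfl; intro k _; ring
          · exact Finset.sum_congr rfl (fun i _ => mul_comm _ _)
      _ = 0 := by rw [hcv, hc0]; simp
  have hrangeΦ : Module.finrank ℝ (LinearMap.range Φ) = d + 1 := by
    have h1 := LinearMap.finrank_range_add_finrank_ker Φ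
    rw [hkerΦ, finrank_bot, Module.finrank_prod, Module.finrank_fin_fun, Module.finrank_self] at h1
    omega
  have heq : LinearMap.range Φ = LinearMap.ker f := by
    apply Submodule.eq_of_le_of_finrank_eq hsub
    rw [hrangeΦ, hkerf]
  have hu' : u ∈ LinearMap.ker f := hu
  rw [← heq] at hu'
  obtain ⟨p, hp⟩ := hu'
  exact ⟨p.1, p.2, fun i => congrFun hp i⟩

lemma not_exposed_helper (v : Fin (d+2) → Fin d → ℝ) (c : Fin (d+2) → ℝ)
    (hc0 : ∑ i, c i = 0) (hcv : ∑ i, c i • v i = 0)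
    (hker : ∀ w : Fin (d+2) → ℝ, ∑ i, w i = 0 → ∑ i, w i • v i = 0 → ∃ t : ℝ, w = t • c)
    (hcne : ∀ i, c i ≠ 0)
    (hneg2 : ∃ i j : Fin (d+2), i ≠ j ∧ c i < 0 ∧ c j < 0)
    (S : Set (Fin (d+2))) (hSc : ∀ j ∉ S, c j < 0) (hSne : S ≠ Set.univ) :
    ¬ IsExposed ℝ (convexHull ℝ (Set.range v)) (convexHull ℝ (v '' S)) := by
  classical
  intro hexp
  set A := convexHull ℝ (Set.range v) with hA
  set B := convexHull ℝ (v '' S) with hB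
  obtain ⟨j₁, hj₁⟩ : ∃ j, j ∉ S := by
    by_contra h
    push_neg at h
    exact hSne (Set.eq_univ_of_forall h)
  have hcj₁ : c j₁ < 0 := hSc j₁ hj₁
  have hPosS : ∀ i, 0 < c i → i ∈ S := by
    intro i hi
    by_contra h
    exact absurd (hSc i h) (not_lt.2 hi.le)
  -- the positive part sum
  set s : ℝ := ∑ i, (if 0 < c i then c i else 0) with hs_def
  have hspos : 0 < s := by
    obtain ⟨i₁, hi₁⟩ : ∃ i, 0 < c i := by
      by_contra h
      push_neg at h
      have hlt : ∑ i, c i < ∑ _i : Fin (d+2), (0:ℝ) :=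
        Finset.sum_lt_sum (fun i _ => h i) ⟨j₁, Finset.mem_univ _, hcj₁⟩
      rw [Finset.sum_const_zero, hc0] at hlt
      exact lt_irrefl 0 hlt
    have h1 : (if 0 < c i₁ then c i₁ else 0) ≤ s :=
      Finset.single_le_sum (f := fun i => if 0 < c i then c i else 0)
        (fun i _ => by split <;> linarith) (Finset.mem_univ i₁)
    rw [if_pos hi₁] at h1
    linarith
  -- split of the sums
  have hparts : ∀ i, (if 0 < c i then c i else 0) + (if c i < 0 then c i else 0) = c i := by
    intro i
    rcases (hcne i).lt_or_gt with h | h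
    · rw [if_neg (by linarith), if_pos h]; ring
    · rw [if_pos h, if_neg (by linarith)]; ring
  have hsplit0 : s + ∑ i, (if c i < 0 then c i else 0) = 0 := by
    rw [hs_def, ← Finset.sum_add_distrib, Finset.sum_congr rfl (fun i _ => hparts i), hc0]
  have hnegsum : ∑ i, (if c i < 0 then -c i else 0) = s := by
    have : ∑ i, (if c i < 0 then -c i else 0) = -∑ i, (if c i < 0 then c i else 0) := by
      rw [← Finset.sum_neg_distrib]
      apply Finset.sum_congr rfl
      intro i _
      split <;> simp
    rw [this]; linarith
  have hsplitv : (∑ i, (if 0 < c i then c i else 0) • v i)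
      = ∑ i, (if c i < 0 then -c i else 0) • v i := by
    have h1 : ∑ i, (if 0 < c i then c i else 0) • v i
        + ∑ i, (if c i < 0 then c i else 0) • v i = 0 := by
      rw [← Finset.sum_add_distrib, ← hcv]
      apply Finset.sum_congr rfl
      intro i _
      rcases (hcne i).lt_or_gt with h | h
      · rw [if_neg (by linarith), if_pos h]; simp
      · rw [if_pos h, if_neg (by linarith)]; simp
    have h2 : ∑ i, (if c i < 0 then -c i else 0) • v i
        = -∑ i, (if c i < 0 then c i else 0) • v i := by
      rw [← Finset.sum_neg_distrib]
      apply Finset.sum_congr rfl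
      intro i _
      split <;> simp
    rw [h2]; exact eq_neg_of_add_eq_zero_left h1
  -- the point p
  set p : Fin d → ℝ := ∑ i, ((if 0 < c i then c i else 0)/s) • v i with hp_def
  have hp_wN : p = ∑ i, ((if c i < 0 then -c i else 0)/s) • v i := by
    rw [hp_def]
    have e : ∀ (w : Fin (d+2) → ℝ), ∑ i, (w i / s) • v i = s⁻¹ • ∑ i, w i • v i := by
      intro w
      rw [Finset.smul_sum]
      apply Finset.sum_congr rfl
      intro i _
      rw [smul_smul, div_eq_inv_mul]
    rw [e, e, hsplitv]
  have hpB : p ∈ B := by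
    rw [hB, mem_hull_iff]
    refine ⟨fun i => (if 0 < c i then c i else 0)/s,
      fun i => div_nonneg (by split <;> linarith) hspos.le, ?_, ?_, rfl⟩
    · intro i hi
      show (if 0 < c i then c i else 0)/s = 0
      rw [if_neg (by intro h; exact hi (hPosS i h)), zero_div]
    · rw [← Finset.sum_div, ← hs_def, div_self (ne_of_gt hspos)]
  have hwN0 : ∀ i, 0 ≤ (if c i < 0 then -c i else 0)/s := by
    intro i
    have h0 : (0:ℝ) ≤ (if c i < 0 then -c i else 0) := by split <;> linarith
    exact div_nonneg h0 hspos.le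
  have hwN1 : ∑ i, (if c i < 0 then -c i else 0)/s = 1 := by
    rw [← Finset.sum_div, hnegsum, div_self (ne_of_gt hspos)]
  -- use exposedness
  obtain ⟨l, hl⟩ := hexp ⟨p, hpB⟩
  have hpmax : ∀ y ∈ A, l y ≤ l p := by
    have := hpB
    rw [hl] at this
    exact this.2
  have hvA : ∀ i, v i ∈ A := fun i => subset_convexHull ℝ _ (Set.mem_range_self i)
  have hlp : l p = ∑ i, ((if c i < 0 then -c i else 0)/s) * l (v i) := by
    rw [hp_wN, map_sum]
    apply Finset.sum_congr rfl
    intro i _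
    rw [_root_.map_smul]; rfl
  have hzero : ∑ i, ((if c i < 0 then -c i else 0)/s) * (l p - l (v i)) = 0 := by
    have : ∑ i, ((if c i < 0 then -c i else 0)/s) * (l p - l (v i))
        = (∑ i, ((if c i < 0 then -c i else 0)/s)) * l p
          - ∑ i, ((if c i < 0 then -c i else 0)/s) * l (v i) := by
      rw [Finset.sum_mul, ← Finset.sum_sub_distrib]
      apply Finset.sum_congr rfl
      intro i _; ring
    rw [this, hwN1, one_mul, ← hlp, sub_self]
  have hleq : ∀ i, c i < 0 → l (v i) = l p := by
    intro i hi
    have hterm := (Finset.sum_eq_zero_iff_of_nonneg (fun i _ => by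
      have h1 := hwN0 i
      have h2 : l (v i) ≤ l p := hpmax _ (hvA i)
      exact mul_nonneg h1 (by linarith))).1 hzero i (Finset.mem_univ i)
    have hwpos : 0 < (if c i < 0 then -c i else 0)/s := by
      rw [if_pos hi]
      exact div_pos (by linarith) hspos
    have := mul_eq_zero.1 hterm
    rcases this with h | h
    · exact absurd h (ne_of_gt hwpos)
    · linarith
  -- v j₁ lies in B
  have hvj₁B : v j₁ ∈ B := by
    rw [hl]
    exact ⟨hvA j₁, fun y hy => (hpmax y hy).trans_eq (hleq j₁ hcj₁).symm⟩
  -- contradiction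
  rw [hB, mem_hull_iff] at hvj₁B
  obtain ⟨μ, hμ0, hμS, hμ1, hμv⟩ := hvj₁B
  set w : Fin (d+2) → ℝ := fun i => μ i - (if i = j₁ then (1:ℝ) else 0) with hw_def
  have hw0 : ∑ i, w i = 0 := by
    rw [hw_def]
    rw [Finset.sum_sub_distrib, hμ1, Finset.sum_ite_eq' Finset.univ j₁ (fun _ => (1:ℝ))]
    simp
  have hwv : ∑ i, w i • v i = 0 := by
    rw [hw_def]
    have : ∀ i, (μ i - (if i = j₁ then (1:ℝ) else 0)) • v i
        = μ i • v i - (if i = j₁ then (1:ℝ) else 0) • v i := fun i => sub_smul _ _ _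
    simp only [this]
    rw [Finset.sum_sub_distrib, hμv]
    have h3 : ∑ i, (if i = j₁ then (1:ℝ) else 0) • v i = v j₁ := by
      rw [Finset.sum_congr rfl (fun i (_ : i ∈ Finset.univ) =>
        (by split <;> simp : (if i = j₁ then (1:ℝ) else 0) • v i
          = (if i = j₁ then v i else 0)))]
      rw [Finset.sum_ite_eq' Finset.univ j₁ (fun i => v i)]
      simp
    rw [h3, sub_self]
  obtain ⟨t, ht⟩ := hker w hw0 hwv
  have htpos : 0 < t := by
    have h1 : w j₁ = -1 := by
      rw [hw_def]
      simp [hμS j₁ hj₁]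
    have h2 : w j₁ = t * c j₁ := by rw [ht]; rfl
    nlinarith
  by_cases hex : ∃ i, i ∉ S ∧ i ≠ j₁
  · obtain ⟨i, hiS, hij⟩ := hex
    have h1 : w i = 0 := by
      rw [hw_def]
      simp [hμS i hiS, hij]
    have h2 : w i = t * c i := by rw [ht]; rfl
    rcases (hcne i).lt_or_gt with h | h <;> nlinarith
  · push_neg at hex
    obtain ⟨i, j, hij, hci, hcj⟩ := hneg2
    have hkey : ∀ k, c k < 0 → k ≠ j₁ → False := by
      intro k hk hkj
      have hkS : k ∈ S := by
        by_contra h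
        exact hkj (hex k h)
      have h1 : 0 ≤ w k := by
        rw [hw_def]
        simp only [if_neg hkj, sub_zero]
        exact hμ0 k
      have h2 : w k = t * c k := by rw [ht]; rfl
      nlinarith
    by_cases hii : i = j₁
    · exact hkey j hcj (by rw [← hii]; exact (Ne.symm hij))
    · exact hkey i hci hii

/-- exposed iff the parity condition -/
lemma master (hd : 2 ≤ d) (v : Fin (d+2) → Fin d → ℝ) (c : Fin (d+2) → ℝ)
    (hc0 : ∑ i, c i = 0) (hcv : ∑ i, c i • v i = 0)
    (hsign : ∀ i : Fin (d+2), 0 < (-1:ℝ)^(i:ℕ) * c i)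
    (hker : ∀ w : Fin (d+2) → ℝ, ∑ i, w i = 0 → ∑ i, w i • v i = 0 → ∃ t : ℝ, w = t • c)
    (S : Set (Fin (d+2))) :
    IsExposed ℝ (convexHull ℝ (Set.range v)) (convexHull ℝ (v '' S)) ↔
      (S = ∅ ∨ S = Set.univ ∨
        ((∃ i, i ∉ S ∧ Even (i:ℕ)) ∧ (∃ j, j ∉ S ∧ Odd (j:ℕ)))) := by
  classical
  have hcpos : ∀ i : Fin (d+2), Even (i:ℕ) → 0 < c i := by
    intro i hi
    have := hsign i
    rwa [hi.neg_one_pow, one_mul] at this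
  have hcneg : ∀ i : Fin (d+2), Odd (i:ℕ) → c i < 0 := by
    intro i hi
    have := hsign i
    rw [hi.neg_one_pow, neg_one_mul] at this
    linarith
  have hcne : ∀ i, c i ≠ 0 := by
    intro i
    rcases Nat.even_or_odd (i:ℕ) with h | h
    · exact (hcpos i h).ne'
    · exact (hcneg i h).ne
  have hcne0 : c ≠ 0 := fun h => hcne 0 (congrFun h 0)
  constructor
  · -- exposed → condition
    intro hexp
    by_contra hP
    push_neg at hP
    obtain ⟨hS0, hSu, hpar⟩ := hP
    rcases Classical.em ((∃ i, i ∉ S ∧ Even (i:ℕ))) with heven | heven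
    · -- then no odd outside S : Sᶜ ⊆ evens
      have hodd : ∀ j, j ∉ S → Even (j:ℕ) := by
        intro j hj
        rcases Nat.even_or_odd (j:ℕ) with h | h
        · exact h
        · exact absurd h (hpar heven j hj)
      -- apply helper with -c
      refine not_exposed_helper v (-c) (by simp [hc0]) ?_ ?_ (fun i => by simp [hcne i]) ?_ S ?_ hSu hexp
      · have h2 : ∑ i, (-c) i • v i = -∑ i, c i • v i := by
          rw [← Finset.sum_neg_distrib]
          exact Finset.sum_congr rfl (fun i _ => by simp [neg_smul])
        rw [h2, hcv, neg_zero]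
      · intro w hw1 hw2
        obtain ⟨t, ht⟩ := hker w hw1 hw2
        exact ⟨-t, by rw [ht]; funext i; simp⟩
      · refine ⟨⟨0, by omega⟩, ⟨2, by omega⟩, Fin.ne_of_val_ne (by norm_num), ?_, ?_⟩
        · simp only [Pi.neg_apply, neg_lt_zero]
          exact hcpos ⟨0, by omega⟩ ⟨0, rfl⟩
        · simp only [Pi.neg_apply, neg_lt_zero]
          exact hcpos ⟨2, by omega⟩ ⟨1, rfl⟩
      · intro j hj
        simp only [Pi.neg_apply, neg_lt_zero]
        exact hcpos j (hodd j hj)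
    · -- no even outside S : Sᶜ ⊆ odds
      have hodd : ∀ j, j ∉ S → Odd (j:ℕ) := by
        intro j hj
        rcases Nat.even_or_odd (j:ℕ) with h | h
        · exact absurd ⟨j, hj, h⟩ heven
        · exact h
      refine not_exposed_helper v c hc0 hcv hker hcne ?_ S ?_ hSu hexp
      · refine ⟨⟨1, by omega⟩, ⟨3, by omega⟩, Fin.ne_of_val_ne (by norm_num), ?_, ?_⟩
        · exact hcneg ⟨1, by omega⟩ ⟨0, rfl⟩
        · exact hcneg ⟨3, by omega⟩ ⟨1, rfl⟩
      · exact fun j hj => hcneg j (hodd j hj)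
  · -- condition → exposed
    intro hP
    rcases hP with rfl | rfl | ⟨⟨i₀, hi₀S, hi₀e⟩, ⟨j₀, hj₀S, hj₀o⟩⟩
    · intro h
      rw [Set.image_empty, convexHull_empty] at h
      exact absurd h (by simp)
    · intro _
      refine ⟨0, ?_⟩
      rw [Set.image_univ]
      ext x
      simp
    · -- main construction
      by_cases hS0 : S = ∅
      · subst hS0
        intro h
        rw [Set.image_empty, convexHull_empty] at h
        exact absurd h (by simp)
      obtain ⟨s₀, hs₀⟩ := Set.nonempty_iff_ne_empty.2 hS0
      have hci₀ : 0 < c i₀ := hcpos i₀ hi₀e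
      have hcj₀ : c j₀ < 0 := hcneg j₀ hj₀o
      have hij : i₀ ≠ j₀ := by
        intro h
        rw [h] at hci₀
        linarith
      -- build the value vector u
      set R : ℝ := ∑ i, (if i = i₀ then 0 else if i = j₀ then 0 else if i ∈ S then 0 else c i)
        with hR_def
      set x : ℝ := -(|R|+1)/c i₀ with hx_def
      set y : ℝ := (R + |R| + 1)/c j₀ with hy_def
      have hx_neg : x < 0 := by
        rw [hx_def]
        apply div_neg_of_neg_of_pos _ hci₀
        have : 0 ≤ |R| := abs_nonneg R
        linarith
      have hy_neg : y < 0 := by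
        rw [hy_def]
        apply div_neg_of_pos_of_neg _ hcj₀
        have : -R ≤ |R| := neg_le_abs R
        linarith
      set u : Fin (d+2) → ℝ := fun i =>
        if i = i₀ then x else if i = j₀ then y else if i ∈ S then 0 else -1 with hu_def
      have hu_nonpos : ∀ i, u i ≤ 0 := by
        intro i
        rw [hu_def]
        dsimp only
        by_cases h1 : i = i₀
        · rw [if_pos h1]; linarith
        · rw [if_neg h1]
          by_cases h2 : i = j₀
          · rw [if_pos h2]; linarith
          · rw [if_neg h2]
            by_cases h3 : i ∈ S
            · rw [if_pos h3]
            · rw [if_neg h3]; norm_num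
      have hu_S : ∀ i, i ∈ S → u i = 0 := by
        intro i hi
        rw [hu_def]
        dsimp only
        rw [if_neg (by rintro rfl; exact hi₀S hi), if_neg (by rintro rfl; exact hj₀S hi), if_pos hi]
      have hu_nS : ∀ i, i ∉ S → u i < 0 := by
        intro i hi
        rw [hu_def]
        dsimp only
        by_cases h1 : i = i₀
        · rw [if_pos h1]; exact hx_neg
        · rw [if_neg h1]
          by_cases h2 : i = j₀
          · rw [if_pos h2]; exact hy_neg
          · rw [if_neg h2, if_neg hi]; norm_num
      have hcu : ∑ i, c i * u i = 0 := by
        have expand2 : ∀ i : Fin (d+2), c i * u i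
            = (if i = i₀ then c i₀ * x else 0) + (if i = j₀ then c j₀ * y else 0)
              + (if i = i₀ then 0 else if i = j₀ then 0 else if i ∈ S then 0 else -c i) := by
          intro i
          rw [hu_def]
          dsimp only
          by_cases h1 : i = i₀
          · subst h1; simp [hij]
          · by_cases h2 : i = j₀
            · subst h2; simp [h1]
            · by_cases h3 : i ∈ S <;> simp [h1, h2, h3] <;> ring
        rw [Finset.sum_congr rfl (fun i _ => expand2 i), Finset.sum_add_distrib,
          Finset.sum_add_distrib]
        rw [Finset.sum_ite_eq' Finset.univ i₀ (fun _ => c i₀ * x),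
          Finset.sum_ite_eq' Finset.univ j₀ (fun _ => c j₀ * y)]
        simp only [Finset.mem_univ, if_true]
        have hnegR : ∑ i, (if i = i₀ then (0:ℝ) else if i = j₀ then 0 else if i ∈ S then 0
            else -c i) = -R := by
          rw [hR_def, ← Finset.sum_neg_distrib]
          apply Finset.sum_congr rfl
          intro i _
          by_cases h1 : i = i₀
          · rw [if_pos h1, if_pos h1, neg_zero]
          · rw [if_neg h1, if_neg h1]
            by_cases h2 : i = j₀
            · rw [if_pos h2, if_pos h2, neg_zero]
            · rw [if_neg h2, if_neg h2]
              by_cases h3 : i ∈ S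
              · rw [if_pos h3, if_pos h3, neg_zero]
              · rw [if_neg h3, if_neg h3]
        rw [hnegR]
        rw [hx_def, hy_def]
        field_simp
        rw [mul_div_cancel_left₀ _ (ne_of_lt hcj₀)]
        ring
      -- obtain the functional
      obtain ⟨g, a, hga⟩ := exists_functional_s15 v c hcne0 hc0 hcv hker u hcu
      let lin : (Fin d → ℝ) →ₗ[ℝ] ℝ :=
        { toFun := fun z => ∑ k, g k * z k
          map_add' := by intro z z'; simp [mul_add, Finset.sum_add_distrib]
          map_smul' := by
            intro t z
            simp only [Pi.smul_apply, smul_eq_mul, RingHom.id_apply, Finset.mul_sum]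
            exact Finset.sum_congr rfl (fun k _ => by ring) }
      let l : (Fin d → ℝ) →L[ℝ] ℝ := LinearMap.toContinuousLinearMap lin
      have hlv : ∀ i, l (v i) = u i - a := by
        intro i
        have := hga i
        have hl : l (v i) = ∑ k, g k * v i k := rfl
        rw [hl]; linarith
      have hlsum : ∀ w : Fin (d+2) → ℝ, l (∑ i, w i • v i) = ∑ i, w i * l (v i) := by
        intro w
        rw [map_sum]
        exact Finset.sum_congr rfl (fun i _ => by rw [_root_.map_smul]; rfl)
      set A := convexHull ℝ (Set.range v) with hA
      set B := convexHull ℝ (v '' S) with hB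
      have hBA : B ⊆ A := by
        rw [hA, hB]
        exact convexHull_mono (Set.image_subset_range v S)
      have hA' : A = convexHull ℝ (v '' Set.univ) := by rw [Set.image_univ]
      have hwtsum : ∀ w : Fin (d+2) → ℝ, ∑ i, w i = 1 →
          l (∑ i, w i • v i) = ∑ i, w i * u i - a := by
        intro w hw1
        rw [hlsum]
        calc ∑ i, w i * l (v i) = ∑ i, (w i * u i - w i * a) :=
              Finset.sum_congr rfl (fun i _ => by rw [hlv]; ring)
          _ = ∑ i, w i * u i - (∑ i, w i) * a := by
              rw [Finset.sum_sub_distrib, Finset.sum_mul]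
          _ = ∑ i, w i * u i - a := by rw [hw1, one_mul]
      have hval : ∀ z ∈ A, l z ≤ -a ∧ (z ∈ B ↔ l z = -a) := by
        intro z hzA
        rw [hA', mem_hull_iff] at hzA
        obtain ⟨w, hw0, -, hw1, hwv⟩ := hzA
        have hlz : l z = ∑ i, w i * u i - a := by rw [← hwv]; exact hwtsum w hw1
        constructor
        · rw [hlz]
          have h1 : ∑ i, w i * u i ≤ 0 :=
            Finset.sum_nonpos (fun i _ => mul_nonpos_of_nonneg_of_nonpos (hw0 i) (hu_nonpos i))
          linarith
        constructor
        · intro hzB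
          rw [hB, mem_hull_iff] at hzB
          obtain ⟨w', hw'0, hw'S, hw'1, hw'v⟩ := hzB
          have hlz' : l z = ∑ i, w' i * u i - a := by rw [← hw'v]; exact hwtsum w' hw'1
          have h0 : ∑ i, w' i * u i = 0 := by
            apply Finset.sum_eq_zero
            intro i _
            by_cases h : i ∈ S
            · rw [hu_S i h, mul_zero]
            · rw [hw'S i h, zero_mul]
          rw [hlz', h0]; ring
        · intro hlz0
          have h0 : ∑ i, w i * u i = 0 := by rw [hlz] at hlz0; linarith
          have hterm : ∀ i, w i * u i = 0 := by
            intro i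
            have := (Finset.sum_eq_zero_iff_of_nonneg (fun i _ =>
              neg_nonneg.2 (mul_nonpos_of_nonneg_of_nonpos (hw0 i) (hu_nonpos i)))).1
              (by rw [Finset.sum_neg_distrib, h0, neg_zero]) i (Finset.mem_univ i)
            linarith [this]
          have hsupp : ∀ i, i ∉ S → w i = 0 := by
            intro i hi
            have hu := hu_nS i hi
            have := hterm i
            rcases mul_eq_zero.1 this with h | h
            · exact h
            · exact absurd h (ne_of_lt hu)
          rw [hB, mem_hull_iff]
          exact ⟨w, hw0, hsupp, hw1, hwv⟩
      intro _
      refine ⟨l, ?_⟩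
      ext z
      rw [Set.mem_sep_iff]
      constructor
      · intro hz
        have hzA := hBA hz
        refine ⟨hzA, fun y hy => ?_⟩
        rw [((hval z hzA).2).1 hz]
        exact (hval y hy).1
      · rintro ⟨hzA, hmax⟩
        have h1 : l z ≤ -a := (hval z hzA).1
        have h2 : -a ≤ l z := by
          have hs₀A : v s₀ ∈ A := subset_convexHull ℝ _ (Set.mem_range_self s₀)
          have : l (v s₀) = -a := by rw [hlv s₀, hu_S s₀ hs₀]; ring
          rw [← this]
          exact hmax _ hs₀A
        exact ((hval z hzA).2).2 (le_antisymm h1 h2)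

lemma alt_range (n : ℕ) (hn : Even n) : ∑ i ∈ Finset.range n, (-1:ℝ)^i = 0 := by
  rw [geom_sum_eq (by norm_num)]
  rw [hn.neg_one_pow]
  norm_num

lemma alt_fin (n : ℕ) (hn : Even n) : ∑ k : Fin n, (-1:ℝ)^(k:ℕ) = 0 := by
  rw [Fin.sum_univ_eq_sum_range (fun i => (-1:ℝ)^i)]
  exact alt_range n hn


lemma neg_one_sq_pow (a b : ℕ) : (-1:ℝ)^a * (-1:ℝ)^(b+a+1) = (-1:ℝ)^(b+1) := by
  rw [← pow_add]
  have : a + (b + a + 1) = 2*a + (b+1) := by ring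
  rw [this, pow_add, pow_mul, neg_one_sq, one_pow, one_mul]

lemma bvec_term (k : Fin d) (ℓ : Fin (d+2)) :
    (-1:ℝ)^(ℓ:ℕ) * bvec d ℓ k
      = (-1:ℝ)^((k:ℕ)+1) + (if ℓ = (⟨(k:ℕ)+2, by omega⟩ : Fin (d+2)) then ((d:ℝ)+2) * (-1:ℝ)^(k:ℕ) else 0) := by
  by_cases h : ℓ = (⟨(k:ℕ)+2, by omega⟩ : Fin (d+2))
  · subst h
    rw [if_pos rfl]
    show (-1:ℝ)^((k:ℕ)+2) * bvec d _ k = _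
    rw [bvec, if_pos rfl]
    have h1 : (-1:ℝ)^((k:ℕ)+2) = (-1:ℝ)^(k:ℕ) := by
      rw [pow_succ, pow_succ]; ring
    rw [h1]
    push_cast
    ring
  · rw [if_neg h, bvec, if_neg (by
      intro hc
      apply h
      exact Fin.ext (show (ℓ:ℕ) = (k:ℕ)+2 by omega))]
    rw [neg_one_sq_pow]
    ring

lemma bvec_hcv : ∑ ℓ : Fin (d+2), ((-1:ℝ)^(ℓ:ℕ)) • bvec d ℓ = 0 := by
  have he2 : Even (d+2) ↔ Even d := by simp [Nat.even_add]
  funext k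
  rw [Finset.sum_apply]
  have : ∀ ℓ : Fin (d+2), ((-1:ℝ)^(ℓ:ℕ) • bvec d ℓ) k = (-1:ℝ)^(ℓ:ℕ) * bvec d ℓ k := fun ℓ => rfl
  rw [Finset.sum_congr rfl (fun ℓ _ => by rw [this, bvec_term])]
  rw [Finset.sum_add_distrib, Finset.sum_const, Finset.sum_ite_eq' Finset.univ _
    (fun _ => ((d:ℝ)+2) * (-1:ℝ)^(k:ℕ))]
  simp only [Finset.card_univ, Fintype.card_fin, Finset.mem_univ, if_true, nsmul_eq_mul,
    Pi.zero_apply]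
  push_cast
  rw [pow_succ]
  ring

lemma bvec_hker (hd : 2 ≤ d) (he : Even d) (w : Fin (d+2) → ℝ)
    (hw0 : ∑ i, w i = 0) (hwv : ∑ i, w i • bvec d i = 0) :
    ∃ t : ℝ, w = t • (fun ℓ : Fin (d+2) => (-1:ℝ)^(ℓ:ℕ)) := by
  set T : ℝ := ∑ ℓ : Fin (d+2), (-1:ℝ)^(ℓ:ℕ) * w ℓ with hT_def
  -- row equations
  have row : ∀ k : Fin d, w (⟨(k:ℕ)+2, by omega⟩ : Fin (d+2)) = (-1:ℝ)^(k:ℕ) * T / ((d:ℝ)+2) := by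
    intro k
    have hco : ∑ ℓ : Fin (d+2), w ℓ * bvec d ℓ k = 0 := by
      have := congrFun hwv k
      rw [Finset.sum_apply] at this
      exact this
    -- expand termwise
    have hterm : ∀ ℓ : Fin (d+2), w ℓ * bvec d ℓ k
        = (-1:ℝ)^((k:ℕ)+1) * ((-1:ℝ)^(ℓ:ℕ) * w ℓ)
          + (if ℓ = (⟨(k:ℕ)+2, by omega⟩ : Fin (d+2)) then ((d:ℝ)+2) * w ℓ else 0) := by
      intro ℓ
      by_cases h : ℓ = (⟨(k:ℕ)+2, by omega⟩ : Fin (d+2))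
      · subst h
        rw [if_pos rfl, bvec, if_pos rfl]
        show w _ * ((d:ℝ)+1) = (-1:ℝ)^((k:ℕ)+1) * ((-1:ℝ)^((k:ℕ)+2) * w _) + _
        have h1 : (-1:ℝ)^((k:ℕ)+1) * (-1:ℝ)^((k:ℕ)+2) = -1 := by
          rw [← pow_add]
          have : (k:ℕ)+1 + ((k:ℕ)+2) = 2*((k:ℕ)+1) + 1 := by ring
          rw [this, pow_succ, pow_mul, neg_one_sq, one_pow, one_mul]
        calc w (⟨(k:ℕ)+2, by omega⟩ : Fin (d+2)) * ((d:ℝ)+1)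
            = -(w _) + ((d:ℝ)+2) * w _ := by ring
          _ = _ := by rw [← mul_assoc, h1]; ring
      · rw [if_neg h, bvec, if_neg (by intro hc; exact h (Fin.ext (show (ℓ:ℕ) = (k:ℕ)+2 by omega))), add_zero]
        have h2 : (-1:ℝ)^((k:ℕ)+1) * (-1:ℝ)^(ℓ:ℕ) = (-1:ℝ)^((k:ℕ)+(ℓ:ℕ)+1) := by
          rw [← pow_add]
          congr 1
          omega
        rw [← mul_assoc, h2]
        ring
    rw [Finset.sum_congr rfl (fun ℓ _ => hterm ℓ), Finset.sum_add_distrib,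
      Finset.sum_ite_eq' Finset.univ _ (fun ℓ => ((d:ℝ)+2) * w ℓ), ← Finset.mul_sum, ← hT_def] at hco
    simp only [Finset.mem_univ, if_true] at hco
    have hd2 : ((d:ℝ)+2) ≠ 0 := by positivity
    have hpow : (-1:ℝ)^((k:ℕ)+1) = -(-1:ℝ)^(k:ℕ) := by rw [pow_succ]; ring
    rw [hpow] at hco
    rw [eq_div_iff hd2]
    nlinarith [hco]
  -- alternating sum over the tail is zero
  have htail0 : ∑ k : Fin d, w ((⟨(k:ℕ)+2, by omega⟩ : Fin (d+2))) = 0 := by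
    rw [Finset.sum_congr rfl (fun k _ => row k)]
    rw [show ∑ k : Fin d, (-1:ℝ)^(k:ℕ) * T / ((d:ℝ)+2)
        = (∑ k : Fin d, (-1:ℝ)^(k:ℕ)) * (T / ((d:ℝ)+2)) by
      rw [Finset.sum_mul]
      exact Finset.sum_congr rfl (fun k _ => by rw [mul_div_assoc])]
    rw [alt_fin d he]
    simp
  have htailT : ∑ k : Fin d, (-1:ℝ)^((k:ℕ)+2) * w ((⟨(k:ℕ)+2, by omega⟩ : Fin (d+2)))
      = (d:ℝ) * T / ((d:ℝ)+2) := by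
    have step : ∀ k : Fin d, (-1:ℝ)^((k:ℕ)+2) * w ((⟨(k:ℕ)+2, by omega⟩ : Fin (d+2)))
        = T/((d:ℝ)+2) := by
      intro k
      rw [row k]
      have h1 : (-1:ℝ)^((k:ℕ)+2) * (-1:ℝ)^(k:ℕ) = 1 := by
        rw [← pow_add]
        exact Even.neg_one_pow ⟨(k:ℕ)+1, by ring⟩
      calc (-1:ℝ)^((k:ℕ)+2) * ((-1:ℝ)^(k:ℕ) * T / ((d:ℝ)+2))
          = ((-1:ℝ)^((k:ℕ)+2) * (-1:ℝ)^(k:ℕ)) * T / ((d:ℝ)+2) := by ring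
        _ = T/((d:ℝ)+2) := by rw [h1, one_mul]
    rw [Finset.sum_congr rfl (fun k _ => step k), Finset.sum_const]
    simp only [Finset.card_univ, Fintype.card_fin, nsmul_eq_mul]
    ring
  -- decompose the full sums
  have hsplit : ∀ f : Fin (d+2) → ℝ, ∑ ℓ, f ℓ
      = f 0 + f 1 + ∑ k : Fin d, f (⟨(k:ℕ)+2, by omega⟩ : Fin (d+2)) := by
    intro f
    rw [Fin.sum_univ_succ, Fin.sum_univ_succ]
    have : ∀ k : Fin d, (k.succ.succ : Fin (d+2)) = (⟨(k:ℕ)+2, by omega⟩ : Fin (d+2)) := by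
      intro k
      exact Fin.ext (by simp)
    rw [Finset.sum_congr rfl (fun k _ => by rw [this k])]
    show f 0 + (f (0:Fin (d+1)).succ + _) = _
    have h01 : ((0:Fin (d+1)).succ : Fin (d+2)) = 1 := rfl
    rw [h01]
    ring
  have heq1 : w 0 + w 1 = 0 := by
    have := hsplit w
    rw [hw0, htail0] at this
    linarith
  have heqT : T = w 0 - w 1 + (d:ℝ) * T / ((d:ℝ)+2) := by
    have := hsplit (fun ℓ => (-1:ℝ)^(ℓ:ℕ) * w ℓ)
    rw [← hT_def] at this
    have h0 : (-1:ℝ)^((0:Fin (d+2)):ℕ) * w 0 = w 0 := by norm_num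
    have h1 : (-1:ℝ)^((1:Fin (d+2)):ℕ) * w 1 = -w 1 := by
      have : ((1:Fin (d+2)):ℕ) = 1 := rfl
      rw [this]; ring
    have h2 : ∑ k : Fin d, (-1:ℝ)^(((⟨(k:ℕ)+2, by omega⟩ : Fin (d+2))):ℕ)
        * w (⟨(k:ℕ)+2, by omega⟩ : Fin (d+2))
        = ∑ k : Fin d, (-1:ℝ)^((k:ℕ)+2) * w (⟨(k:ℕ)+2, by omega⟩ : Fin (d+2)) := rfl
    rw [h0, h1, h2, htailT] at this
    linarith
  have hT : T = ((d:ℝ)+2) * w 0 := by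
    have hd2 : ((d:ℝ)+2) ≠ 0 := by positivity
    have heq1d : (d:ℝ) * (w 0 + w 1) = 0 := by rw [heq1, mul_zero]
    field_simp at heqT
    nlinarith [heqT, heq1, heq1d]
  refine ⟨w 0, funext fun ℓ => ?_⟩
  show w ℓ = w 0 * (-1:ℝ)^(ℓ:ℕ)
  rcases Nat.lt_or_ge (ℓ:ℕ) 2 with h | h
  · have h01 : (ℓ:ℕ) = 0 ∨ (ℓ:ℕ) = 1 := by omega
    rcases h01 with h0 | h1
    · have hℓ : ℓ = 0 := Fin.ext (by simp [h0])
      subst hℓ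
      simp
    · have hℓ : ℓ = 1 := Fin.ext (by simp [h1])
      subst hℓ
      have hv1 : ((1:Fin (d+2)):ℕ) = 1 := rfl
      rw [hv1, pow_one]
      linarith
  · set k : Fin d := ⟨(ℓ:ℕ) - 2, by omega⟩ with hk
    have hℓk : ℓ = (⟨(k:ℕ)+2, by omega⟩ : Fin (d+2)) :=
      Fin.ext (show (ℓ:ℕ) = (ℓ:ℕ) - 2 + 2 by omega)
    rw [hℓk, row k, hT]
    have hpow : (-1:ℝ)^((⟨(k:ℕ)+2, by omega⟩ : Fin (d+2)):ℕ) = (-1:ℝ)^(k:ℕ) := by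
      show (-1:ℝ)^((k:ℕ)+2) = _
      rw [pow_succ, pow_succ]; ring
    rw [hpow]
    have hd2 : ((d:ℝ)+2) ≠ 0 := by positivity
    field_simp

noncomputable def ccyc (d : ℕ) : Fin (d+2) → ℝ :=
  fun ℓ => (-1:ℝ)^(ℓ:ℕ) * ((d+1).choose (ℓ:ℕ))

lemma ccyc_sum' (j : ℕ) (hj : j < d+1) :
    ∑ ℓ : Fin (d+2), ccyc d ℓ * ((ℓ:ℝ)+1)^j = 0 := by
  have h := altsum (d+1) j hj
  have heq : ∑ ℓ : Fin (d+2), ccyc d ℓ * ((ℓ:ℝ)+1)^j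
      = ∑ i ∈ Finset.range (d+2), (-1:ℝ)^i * ((d+1).choose i) * ((i:ℝ)+1)^j :=
    Fin.sum_univ_eq_sum_range (fun i => (-1:ℝ)^i * ((d+1).choose i) * ((i:ℝ)+1)^j) (d+2)
  rw [heq]
  exact h

lemma ccyc_hc0 : ∑ ℓ : Fin (d+2), ccyc d ℓ = 0 := by
  have := ccyc_sum' (d := d) 0 (by omega)
  simpa using this

lemma ccyc_hcv : ∑ ℓ : Fin (d+2), ccyc d ℓ • cyc d ℓ = 0 := by
  funext k
  rw [Finset.sum_apply]
  have : ∀ ℓ : Fin (d+2), (ccyc d ℓ • cyc d ℓ) k = ccyc d ℓ * ((ℓ:ℝ)+1)^((k:ℕ)+1) := fun ℓ => rfl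
  rw [Finset.sum_congr rfl (fun ℓ _ => this ℓ), ccyc_sum' ((k:ℕ)+1) (by omega)]
  rfl

lemma ccyc_sign (ℓ : Fin (d+2)) : 0 < (-1:ℝ)^(ℓ:ℕ) * ccyc d ℓ := by
  rw [ccyc, ← mul_assoc, ← pow_add, Even.neg_one_pow ⟨(ℓ:ℕ), rfl⟩, one_mul]
  have : 0 < (d+1).choose (ℓ:ℕ) := Nat.choose_pos (by omega)
  exact_mod_cast this

lemma ccyc_hker (w : Fin (d+2) → ℝ)
    (hw0 : ∑ i, w i = 0) (hwv : ∑ i, w i • cyc d i = 0) :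
    ∃ t : ℝ, w = t • ccyc d := by
  classical
  -- t such that w - t • c vanishes at the last index
  set t : ℝ := w (Fin.last (d+1)) / ccyc d (Fin.last (d+1)) with ht_def
  have hclast : ccyc d (Fin.last (d+1)) ≠ 0 := by
    have := ccyc_sign (d := d) (Fin.last (d+1))
    intro h
    rw [h, mul_zero] at this
    exact lt_irrefl 0 this
  set w' : Fin (d+2) → ℝ := fun ℓ => w ℓ - t * ccyc d ℓ with hw'_def
  have hw'last : w' (Fin.last (d+1)) = 0 := by
    rw [hw'_def]
    dsimp only
    rw [ht_def, div_mul_cancel₀ _ hclast, sub_self]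
  have hw'sum : ∀ j : ℕ, j < d+1 → ∑ ℓ : Fin (d+2), w' ℓ * ((ℓ:ℝ)+1)^j = 0 := by
    intro j hj
    have hwsum : ∑ ℓ : Fin (d+2), w ℓ * ((ℓ:ℝ)+1)^j = 0 := by
      rcases j with _ | k
      · simpa using hw0
      · have := congrFun hwv (⟨k, by omega⟩ : Fin d)
        rw [Finset.sum_apply] at this
        exact this
    have : ∑ ℓ : Fin (d+2), w' ℓ * ((ℓ:ℝ)+1)^j
        = ∑ ℓ : Fin (d+2), w ℓ * ((ℓ:ℝ)+1)^j - t * ∑ ℓ : Fin (d+2), ccyc d ℓ * ((ℓ:ℝ)+1)^j := by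
      rw [Finset.mul_sum, ← Finset.sum_sub_distrib]
      apply Finset.sum_congr rfl
      intro ℓ _
      rw [hw'_def]
      ring
    rw [this, hwsum, ccyc_sum' j hj, mul_zero, sub_zero]
  -- Vandermonde
  set x : Fin (d+1) → ℝ := fun ℓ => (ℓ:ℝ)+1 with hx_def
  have hdet : (Matrix.vandermonde x).det ≠ 0 := by
    rw [Matrix.det_vandermonde_ne_zero_iff]
    intro a b hab
    have : (a:ℝ) = b := by
      have : ((a:ℝ)+1) = ((b:ℝ)+1) := hab
      linarith
    exact Fin.ext (Nat.cast_injective this)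
  have hdetT : (Matrix.vandermonde x)ᵀ.det ≠ 0 := by rwa [Matrix.det_transpose]
  set y : Fin (d+1) → ℝ := fun ℓ => w' ℓ.castSucc with hy_def
  have hmv : (Matrix.vandermonde x)ᵀ.mulVec y = 0 := by
    funext j
    show ∑ ℓ : Fin (d+1), (Matrix.vandermonde x) ℓ j * y ℓ = 0
    have expand : ∀ ℓ : Fin (d+1), (Matrix.vandermonde x) ℓ j * y ℓ
        = w' ℓ.castSucc * (((ℓ.castSucc : Fin (d+2)):ℝ)+1)^(j:ℕ) := by
      intro ℓ
      rw [Matrix.vandermonde_apply, hy_def, hx_def]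
      have : ((ℓ.castSucc : Fin (d+2)):ℝ) = (ℓ:ℝ) := by
        norm_cast
      rw [this]
      ring
    rw [Finset.sum_congr rfl (fun ℓ _ => expand ℓ)]
    have := hw'sum (j:ℕ) (by omega)
    rw [Fin.sum_univ_castSucc (f := fun ℓ : Fin (d+2) => w' ℓ * ((ℓ:ℝ)+1)^(j:ℕ))] at this
    rw [hw'last, zero_mul, add_zero] at this
    exact this
  have hy0 : y = 0 := Matrix.eq_zero_of_mulVec_eq_zero hdetT hmv
  have hw'0 : ∀ ℓ, w' ℓ = 0 := by
    intro ℓ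
    rcases Fin.lastCases (motive := fun ℓ => w' ℓ = 0) hw'last (fun i => by
      have := congrFun hy0 i
      exact this) ℓ with h
    exact h
  refine ⟨t, funext fun ℓ => ?_⟩
  have := hw'0 ℓ
  rw [hw'_def] at this
  dsimp only at this
  show w ℓ = t * ccyc d ℓ
  linarith

end Aux

/-- for even `d ≥ 2`, the `d`-th Laplacian polytope of `∂σ_{d+1}` is
combinatorially equivalent to the `d`-dimensional cyclic polytope on `d+2`
vertices: there is a bijection of the vertex sets under which the (exposed) faces
spanned by corresponding sets of vertices match up. -/
theorem stmt15 (d : ℕ) (hd : 2 ≤ d) (he : Even d) :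
    ∃ e : Fin (d+2) ≃ Fin (d+2), ∀ S : Set (Fin (d+2)),
      IsExposed ℝ (convexHull ℝ (Set.range (bvec d)))
          (convexHull ℝ (bvec d '' S)) ↔
      IsExposed ℝ (convexHull ℝ (Set.range (cyc d)))
          (convexHull ℝ (cyc d '' (e '' S))) := by
  refine ⟨Equiv.refl _, fun S => ?_⟩
  have himg : (Equiv.refl (Fin (d+2))) '' S = S := by simp
  rw [himg]
  rw [master hd (bvec d) (fun ℓ : Fin (d+2) => (-1:ℝ)^(ℓ:ℕ))
    (alt_fin (d+2) (he.add even_two)) bvec_hcv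
    (fun i => by
      show (0:ℝ) < (-1:ℝ)^(i:ℕ) * (-1:ℝ)^(i:ℕ)
      rw [← pow_add, Even.neg_one_pow ⟨(i:ℕ), rfl⟩]
      norm_num)
    (bvec_hker hd he) S]
  rw [master hd (cyc d) (ccyc d) ccyc_hc0 ccyc_hcv ccyc_sign
    (fun w h1 h2 => ccyc_hker w h1 h2) S]
end
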